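/- arXiv:1304.2170 — 4 statements merged into one kernel-verified Lean document; each statement's English description precedes it below -/
import Mathlib

section
/- For any two genomes G1 and G2 on the same finite extremity set V, with adjacency sets Π1 and Π2 respectively, the SCJ distance satisfies d_SCJ(G1,G2) = |Π1 Δ Π2|, where Δ denotes the symmetric difference of the two sets of adjacencies. In particular, some SCJ scenario from G1 to G2 always exists. -/
/-- A genome on an extremity type `V`: a finite set of adjacencies (unordered pairs of
distinct extremities) that are pairwise disjoint (a partial matching). -/
structure Genome (V : Type*) where
  adj : Finset (Sym2 V)
  not_isDiag : ∀ p ∈ adj, ¬ p.IsDiag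
  disj : ∀ p ∈ adj, ∀ q ∈ adj, p ≠ q → ∀ x, x ∈ p → x ∉ q

instance {V : Type*} : Inhabited (Genome V) :=
  ⟨⟨∅, by simp, by simp⟩⟩

variable {V : Type*} [DecidableEq V]

/-- The step from `G` to `G'` is a cut removing the adjacency `p`. -/
def CutsAdj (G G' : Genome V) (p : Sym2 V) : Prop :=
  p ∈ G.adj ∧ G'.adj = G.adj.erase p

/-- The step from `G` to `G'` is a join adding the adjacency `p`
(validity of `G'` forces `p` to be a pair of distinct, currently unmatched extremities). -/
def JoinsAdj (G G' : Genome V) (p : Sym2 V) : Prop :=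
  p ∉ G.adj ∧ G'.adj = insert p G.adj

/-- A single SCJ operation. -/
def SCJStep (G G' : Genome V) : Prop :=
  ∃ p, CutsAdj G G' p ∨ JoinsAdj G G' p

/-- An SCJ scenario from `G1` to `G2`: a finite sequence of genomes starting at `G1`,
ending at `G2`, consecutive ones differing by a single SCJ operation.  A scenario
represented by a list `L` has `L.length - 1` operations. -/
def IsScenario (G1 G2 : Genome V) (L : List (Genome V)) : Prop :=
  L.head? = some G1 ∧ L.getLast? = some G2 ∧ L.Chain' SCJStep

/-- The SCJ distance: the minimum number of operations in a scenario from `G1` to `G2`. -/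
noncomputable def dSCJ (G1 G2 : Genome V) : ℕ :=
  sInf {n | ∃ L, IsScenario G1 G2 L ∧ L.length = n + 1}

/-- A most parsimonious SCJ scenario. -/
def IsMPS (G1 G2 : Genome V) (L : List (Genome V)) : Prop :=
  IsScenario G1 G2 L ∧ L.length = dSCJ G1 G2 + 1

/-- The number of most parsimonious SCJ scenarios from `G1` to `G2`. -/
noncomputable def NumMPS (G1 G2 : Genome V) : ℕ :=
  {L | IsMPS G1 G2 L}.ncard

/-- The `i`-th step of the scenario `L` (steps indexed from `0`) cuts adjacency `p`. -/
def StepCut (L : List (Genome V)) (i : ℕ) (p : Sym2 V) : Prop :=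
  i + 1 < L.length ∧ CutsAdj (L.getD i default) (L.getD (i + 1) default) p

/-- The `i`-th step of the scenario `L` (steps indexed from `0`) joins adjacency `p`. -/
def StepJoin (L : List (Genome V)) (i : ℕ) (p : Sym2 V) : Prop :=
  i + 1 < L.length ∧ JoinsAdj (L.getD i default) (L.getD (i + 1) default) p

/-- `c` is an alternating (up-down) permutation:
`c 0 < c 1 > c 2 < c 3 > …` (i.e. in 1-based notation `c₁ < c₂ > c₃ < …`). -/
def IsAltPerm {n : ℕ} (c : Equiv.Perm (Fin n)) : Prop :=
  ∀ i : ℕ, ∀ h : i + 1 < n,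
    if i % 2 = 0 then c ⟨i, by omega⟩ < c ⟨i + 1, h⟩
    else c ⟨i + 1, h⟩ < c ⟨i, by omega⟩

/-- `A n`, the number of alternating permutations of size `n` (with `A 0 = 1`). -/
noncomputable def altPermCount (n : ℕ) : ℕ :=
  Nat.card {c : Equiv.Perm (Fin n) // IsAltPerm c}

-- aux
lemma Genome.ext' (G1 G2 : Genome V) (h : G1.adj = G2.adj) : G1 = G2 := by
  cases G1; cases G2; simp_all

def subGenome (G : Genome V) (A : Finset (Sym2 V)) (h : A ⊆ G.adj) : Genome V :=
  ⟨A, fun p hp => G.not_isDiag p (h hp),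
   fun p hp q hq hpq x hx => G.disj p (h hp) q (h hq) hpq x hx⟩

lemma scjstep_symm {G G' : Genome V} (h : SCJStep G G') : SCJStep G' G := by
  obtain ⟨p, h | h⟩ := h
  · exact ⟨p, Or.inr ⟨by simp [h.2], by rw [h.2, Finset.insert_erase h.1]⟩⟩
  · exact ⟨p, Or.inl ⟨by simp [h.2], by rw [h.2, Finset.erase_insert h.1]⟩⟩

lemma scenario_reverse {G1 G2 : Genome V} {L : List (Genome V)}
    (h : IsScenario G1 G2 L) : IsScenario G2 G1 L.reverse := by
  obtain ⟨h1, h2, h3⟩ := h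
  refine ⟨by simpa using h2, by simpa using h1, ?_⟩
  rw [List.Chain', List.isChain_reverse]
  exact h3.imp fun a b hab => scjstep_symm hab

lemma scenario_cons {G1 G' G2 : Genome V} {L : List (Genome V)}
    (hL : IsScenario G' G2 L) (hstep : SCJStep G1 G') :
    IsScenario G1 G2 (G1 :: L) := by
  obtain ⟨h1, h2, h3⟩ := hL
  have hne : L ≠ [] := by rintro rfl; simp at h1
  refine ⟨rfl, ?_, ?_⟩
  · rw [List.getLast?_cons] at *
    simp [h2]
  · rw [List.Chain', List.isChain_cons]
    exact ⟨fun b hb => by rw [h1] at hb; obtain rfl := Option.some_inj.mp hb; exact hstep, h3⟩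

/-- scenario of cuts from G1 down to a genome with fewer adjacencies -/
lemma exists_scenario_down (G1 G2 : Genome V) (h : G2.adj ⊆ G1.adj) :
    ∃ L, IsScenario G1 G2 L ∧ L.length = (G1.adj \ G2.adj).card + 1 := by
  generalize hn : (G1.adj \ G2.adj).card = n
  induction n generalizing G1 with
  | zero =>
    have : G1.adj = G2.adj := by
      have := Finset.card_eq_zero.mp hn
      have h2 : G1.adj ⊆ G2.adj := fun x hx => by
        by_contra hc
        exact absurd (Finset.mem_sdiff.mpr ⟨hx, hc⟩) (by simp [this])
      exact subset_antisymm h2 h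
    obtain rfl := Genome.ext' G1 G2 this
    exact ⟨[G1], ⟨rfl, rfl, List.isChain_singleton _⟩, by simp⟩
  | succ n ih =>
    have hne : (G1.adj \ G2.adj).Nonempty := by
      rw [← Finset.card_pos, hn]; omega
    obtain ⟨p, hp⟩ := hne
    rw [Finset.mem_sdiff] at hp
    set G' := subGenome G1 (G1.adj.erase p) (Finset.erase_subset _ _) with hG'
    have hsub : G2.adj ⊆ G'.adj := fun x hx =>
      Finset.mem_erase.mpr ⟨fun hxp => hp.2 (hxp ▸ hx), h hx⟩
    have hcard : (G'.adj \ G2.adj).card = n := by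
      have : G'.adj \ G2.adj = (G1.adj \ G2.adj).erase p := by
        ext x
        simp only [hG', subGenome, Finset.mem_sdiff, Finset.mem_erase]
        tauto
      rw [this, Finset.card_erase_of_mem (Finset.mem_sdiff.mpr hp), hn]
      omega
    obtain ⟨L, hL, hlen⟩ := ih G' hsub hcard
    refine ⟨G1 :: L, scenario_cons hL ⟨p, Or.inl ⟨hp.1, rfl⟩⟩, by simp [hlen]⟩

lemma scenario_append {G1 G2 G3 : Genome V} {L1 L2 : List (Genome V)}
    (h1 : IsScenario G1 G2 L1) (h2 : IsScenario G2 G3 L2) :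
    ∃ L, IsScenario G1 G3 L ∧ L.length + 1 = L1.length + L2.length := by
  obtain ⟨ha, hb, hc⟩ := h1
  obtain ⟨hd, he, hf⟩ := h2
  have hne1 : L1 ≠ [] := by rintro rfl; simp at ha
  have hne2 : L2 ≠ [] := by rintro rfl; simp at hd
  obtain ⟨H, T, rfl⟩ := List.exists_cons_of_ne_nil hne2
  obtain rfl : H = G2 := by simpa using hd
  rcases eq_or_ne T [] with rfl | hT
  · simp only [List.getLast?_singleton, Option.some_inj] at he
    subst he
    exact ⟨L1, ⟨ha, hb, hc⟩, by simp⟩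
  · refine ⟨L1 ++ T, ⟨?_, ?_, ?_⟩, ?_⟩
    · rwa [List.head?_append_of_ne_nil _ hne1]
    · rw [List.getLast?_append_of_ne_nil _ hT]
      obtain ⟨y, T', rfl⟩ := List.exists_cons_of_ne_nil hT
      rwa [List.getLast?_cons_cons] at he
    · rw [List.Chain', List.isChain_append]
      refine ⟨hc, hf.tail, fun x hx y hy => ?_⟩
      rw [hb] at hx
      obtain rfl := Option.some_inj.mp hx
      rw [List.Chain', List.isChain_cons] at hf
      exact hf.1 y hy
    · simp; omega

lemma card_symmDiff_step {G G' : Genome V} (h : SCJStep G G') :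
    (symmDiff G.adj G'.adj).card = 1 := by
  obtain ⟨p, ⟨hp, hadj⟩ | ⟨hp, hadj⟩⟩ := h
  · have : symmDiff G.adj G'.adj = {p} := by
      ext x
      rw [Finset.mem_symmDiff, hadj]
      simp only [Finset.mem_erase, Finset.mem_singleton]
      constructor
      · rintro (⟨h1, h2⟩ | ⟨⟨h1, h2⟩, h3⟩)
        · by_contra hx; exact h2 ⟨hx, h1⟩
        · exact absurd h2 h3
      · rintro rfl; exact Or.inl ⟨hp, by simp⟩
    simp [this]
  · have : symmDiff G.adj G'.adj = {p} := by
      ext x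
      rw [Finset.mem_symmDiff, hadj]
      simp only [Finset.mem_insert, Finset.mem_singleton]
      constructor
      · rintro (⟨h1, h2⟩ | ⟨h1 | h1, h2⟩)
        · exact absurd (Or.inr h1) h2
        · exact h1
        · exact absurd h1 h2
      · rintro rfl; exact Or.inr ⟨Or.inl rfl, hp⟩
    simp [this]

lemma card_symmDiff_triangle (A B C : Finset (Sym2 V)) :
    (symmDiff A C).card ≤ (symmDiff A B).card + (symmDiff B C).card := by
  calc (symmDiff A C).card ≤ (symmDiff A B ∪ symmDiff B C).card :=
        Finset.card_le_card (symmDiff_triangle A B C)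
    _ ≤ _ := Finset.card_union_le _ _

lemma lower_bound : ∀ (L : List (Genome V)) (G1 G2 : Genome V),
    IsScenario G1 G2 L → (symmDiff G1.adj G2.adj).card + 1 ≤ L.length := by
  intro L
  induction L with
  | nil => intro G1 G2 ⟨h, _⟩; simp at h
  | cons G T ih =>
    intro G1 G2 ⟨h1, h2, h3⟩
    obtain rfl : G = G1 := by simpa using h1
    rcases eq_or_ne T [] with rfl | hT
    · simp only [List.getLast?_singleton, Option.some_inj] at h2
      subst h2
      simp
    · obtain ⟨G', T', rfl⟩ := List.exists_cons_of_ne_nil hT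
      rw [List.Chain', List.isChain_cons_cons] at h3
      have hsc : IsScenario G' G2 (G' :: T') := by
        refine ⟨rfl, ?_, h3.2⟩
        rwa [List.getLast?_cons_cons] at h2
      have := ih G' G2 hsc
      have hstep := card_symmDiff_step h3.1
      have htri := card_symmDiff_triangle G.adj G'.adj G2.adj
      simp only [List.length_cons] at this ⊢
      omega


/-- For genomes `G1`, `G2` on the same finite extremity set, a scenario
always exists and the SCJ distance equals the cardinality of the symmetric difference of
the adjacency sets. -/
theorem dSCJ_eq_card_symmDiff {V : Type*} [Fintype V] [DecidableEq V] (G1 G2 : Genome V) :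
    (∃ L, IsScenario G1 G2 L) ∧ dSCJ G1 G2 = (symmDiff G1.adj G2.adj).card := by
  set M : Genome V := subGenome G1 (G1.adj ∩ G2.adj) Finset.inter_subset_left with hM
  obtain ⟨L1, hL1, hlen1⟩ := exists_scenario_down G1 M Finset.inter_subset_left
  obtain ⟨L2', hL2', hlen2⟩ := exists_scenario_down G2 M Finset.inter_subset_right
  have hL2 := scenario_reverse hL2'
  obtain ⟨L, hL, hlen⟩ := scenario_append hL1 hL2
  have e1 : G1.adj \ M.adj = G1.adj \ G2.adj := by
    simp [hM, subGenome, Finset.sdiff_inter_self_left]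
  have e2 : G2.adj \ M.adj = G2.adj \ G1.adj := by
    simp [hM, subGenome, Finset.sdiff_inter_self_right]
  have hcard : (symmDiff G1.adj G2.adj).card
      = (G1.adj \ G2.adj).card + (G2.adj \ G1.adj).card := by
    rw [symmDiff_def, Finset.sup_eq_union, Finset.card_union_of_disjoint disjoint_sdiff_sdiff]
  have hlenL : L.length = (symmDiff G1.adj G2.adj).card + 1 := by
    have : L2'.reverse.length = L2'.length := List.length_reverse
    rw [e1] at hlen1; rw [e2] at hlen2
    omega
  refine ⟨⟨L, hL⟩, ?_⟩
  have hmem : (symmDiff G1.adj G2.adj).card ∈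
      {n | ∃ L, IsScenario G1 G2 L ∧ L.length = n + 1} := ⟨L, hL, hlenL⟩
  refine le_antisymm (Nat.sInf_le hmem) (le_csInf ⟨_, hmem⟩ ?_)
  rintro n ⟨L', hL', hlen'⟩
  have := lower_bound L' G1 G2 hL'
  omega
end

section
/- For every k ≥ 1, consider the pair of genomes forming a single M-shaped path with k adjacencies in G1: on extremities x_1, …, x_{2k}, take Π1 = {{x_{2i-1}, x_{2i}} : 1 ≤ i ≤ k} and Π2 = {{x_{2i}, x_{2i+1}} : 1 ≤ i ≤ k-1}. Then the number of most parsimonious SCJ scenarios from G1 to G2 equals A_{2k-1}, the number of alternating permutations of size 2k-1. -/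
variable {V : Type*} [DecidableEq V]

namespace MShape

lemma Genome.ext' {V : Type*} {G G' : Genome V} (h : G.adj = G'.adj) : G = G' := by
  cases G; cases G'; simp_all

def op (j : ℕ) : Sym2 ℕ := s(j+1, j+2)

lemma op_inj : Function.Injective op := by
  intro a b h; rw [op, op, Sym2.eq_iff] at h; omega

lemma mem_op {x j : ℕ} : x ∈ op j ↔ x = j + 1 ∨ x = j + 2 := by
  simp [op]

def adjOf (n : ℕ) (S : Finset ℕ) : Finset (Sym2 ℕ) :=
  ((Finset.range n).filter (fun j => if j % 2 = 0 then j ∉ S else j ∈ S)).image op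

lemma mem_adjOf {n : ℕ} {S : Finset ℕ} {j : ℕ} :
    op j ∈ adjOf n S ↔ j < n ∧ (if j % 2 = 0 then j ∉ S else j ∈ S) := by
  constructor
  · rintro h
    simp only [adjOf, Finset.mem_image, Finset.mem_filter, Finset.mem_range] at h
    obtain ⟨a, ⟨ha1, ha2⟩, ha3⟩ := h
    obtain rfl := op_inj ha3
    exact ⟨ha1, ha2⟩
  · rintro ⟨h1, h2⟩
    simp only [adjOf, Finset.mem_image, Finset.mem_filter, Finset.mem_range]
    exact ⟨j, ⟨h1, h2⟩, rfl⟩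

lemma mem_adjOf' {n : ℕ} {S : Finset ℕ} {p : Sym2 ℕ} (h : p ∈ adjOf n S) :
    ∃ j, j < n ∧ (if j % 2 = 0 then j ∉ S else j ∈ S) ∧ p = op j := by
  simp only [adjOf, Finset.mem_image, Finset.mem_filter, Finset.mem_range] at h
  obtain ⟨a, ⟨ha1, ha2⟩, ha3⟩ := h
  exact ⟨a, ha1, ha2, ha3.symm⟩

def Good (S : Finset ℕ) : Prop := ∀ j ∈ S, j % 2 = 1 → (j - 1 ∈ S ∧ j + 1 ∈ S)

open Classical in
noncomputable def genOf (n : ℕ) (S : Finset ℕ) : Genome ℕ :=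
  if h : Good S then
    { adj := adjOf n S
      not_isDiag := by
        intro p hp
        simp only [adjOf, Finset.mem_image] at hp
        obtain ⟨a, _, rfl⟩ := hp
        simp [op, Sym2.isDiag_iff_proj_eq]
      disj := by
        intro p hp q hq hpq x hxp hxq
        simp only [adjOf, Finset.mem_image, Finset.mem_filter, Finset.mem_range] at hp hq
        obtain ⟨a, ⟨ha1, ha2⟩, rfl⟩ := hp
        obtain ⟨b, ⟨hb1, hb2⟩, rfl⟩ := hq
        have hab : a ≠ b := fun hh => hpq (by rw [hh])
        simp only [op, Sym2.mem_iff] at hxp hxq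
        have h1 : b = a + 1 ∨ a = b + 1 := by omega
        rcases h1 with rfl | rfl
        · rcases Nat.even_or_odd a with he | ho
          · have ha0 : a % 2 = 0 := Nat.even_iff.mp he
            rw [if_pos ha0] at ha2
            rw [if_neg (by omega)] at hb2
            exact ha2 (h (a+1) hb2 (by omega)).1
          · have ha0 : a % 2 = 1 := Nat.odd_iff.mp ho
            rw [if_neg (by omega)] at ha2
            rw [if_pos (by omega)] at hb2
            exact hb2 (h a ha2 ha0).2
        · rcases Nat.even_or_odd b with he | ho
          · have hb0 : b % 2 = 0 := Nat.even_iff.mp he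
            rw [if_pos hb0] at hb2
            rw [if_neg (by omega)] at ha2
            exact hb2 (h (b+1) ha2 (by omega)).1
          · rw [if_neg (by simp [Nat.odd_iff.mp ho])] at hb2
            rw [if_pos (by have := Nat.odd_iff.mp ho; omega)] at ha2
            exact ha2 (h b hb2 (Nat.odd_iff.mp ho)).2 }
  else default

lemma genOf_adj {n : ℕ} {S : Finset ℕ} (h : Good S) : (genOf n S).adj = adjOf n S := by
  rw [genOf, dif_pos h]

lemma good_empty : Good (∅ : Finset ℕ) := by intro j hj; simp at hj

lemma good_range (n : ℕ) (hn : n % 2 = 1) : Good (Finset.range n) := by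
  intro j hj hj1
  simp only [Finset.mem_range] at *
  omega

/-- Inserting an even (cut) index erases the corresponding adjacency. -/
lemma adjOf_insert_even {n : ℕ} {S : Finset ℕ} {j : ℕ} (hj : j % 2 = 0) :
    adjOf n (insert j S) = (adjOf n S).erase (op j) := by
  rw [adjOf, adjOf, ← Finset.image_erase op_inj]
  congr 1
  ext i
  simp only [Finset.mem_erase, Finset.mem_filter, Finset.mem_range, Finset.mem_insert]
  rcases eq_or_ne i j with rfl | hij
  · simp [hj]
  · constructor
    · rintro ⟨hi, hcond⟩
      refine ⟨hij, hi, ?_⟩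
      split at hcond <;> split <;> simp_all <;> tauto
    · rintro ⟨h0, hi, hcond⟩
      refine ⟨hi, ?_⟩
      split at hcond <;> split <;> simp_all <;> tauto

/-- Inserting an odd (join) index inserts the corresponding adjacency. -/
lemma adjOf_insert_odd {n : ℕ} {S : Finset ℕ} {j : ℕ} (hj : j % 2 = 1) (hjn : j < n)
    (hjS : j ∉ S) :
    adjOf n (insert j S) = insert (op j) (adjOf n S) := by
  rw [adjOf, adjOf, ← Finset.image_insert]
  congr 1
  ext i
  simp only [Finset.mem_insert, Finset.mem_filter, Finset.mem_range]
  rcases eq_or_ne i j with rfl | hij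
  · simp [hj, hjn]
  · constructor
    · rintro ⟨hi, hcond⟩
      refine Or.inr ⟨hi, ?_⟩
      split at hcond <;> split <;> simp_all <;> tauto
    · rintro (rfl | ⟨hi, hcond⟩)
      · exact absurd rfl hij
      · refine ⟨hi, ?_⟩
        split at hcond <;> split <;> simp_all <;> tauto

/-- `adjOf` determines the done-set. -/
lemma det {n : ℕ} {S : Finset ℕ} (hS : S ⊆ Finset.range n) :
    (Finset.range n).filter
      (fun j => if j % 2 = 0 then op j ∉ adjOf n S else op j ∈ adjOf n S) = S := by
  ext j
  simp only [Finset.mem_filter, Finset.mem_range]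
  constructor
  · rintro ⟨hjn, hcond⟩
    rcases Nat.even_or_odd j with he | ho
    · have h0 : j % 2 = 0 := Nat.even_iff.mp he
      rw [if_pos h0] at hcond
      by_contra hjS
      exact hcond (mem_adjOf.mpr ⟨hjn, by rw [if_pos h0]; exact hjS⟩)
    · have h0 : j % 2 = 1 := Nat.odd_iff.mp ho
      rw [if_neg (by omega)] at hcond
      have := (mem_adjOf.mp hcond).2
      rwa [if_neg (by omega)] at this
  · intro hjS
    have hjn : j < n := Finset.mem_range.mp (hS hjS)
    refine ⟨hjn, ?_⟩
    rcases Nat.even_or_odd j with he | ho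
    · have h0 : j % 2 = 0 := Nat.even_iff.mp he
      rw [if_pos h0]
      intro hmem
      have := mem_adjOf.mp hmem
      rw [if_pos h0] at this
      exact this.2 hjS
    · have h0 : j % 2 = 1 := Nat.odd_iff.mp ho
      rw [if_neg (by omega)]
      exact mem_adjOf.mpr ⟨hjn, by rw [if_neg (by omega)]; exact hjS⟩

lemma adjOf_inj {n : ℕ} {S S' : Finset ℕ} (hS : S ⊆ Finset.range n)
    (hS' : S' ⊆ Finset.range n) (h : adjOf n S = adjOf n S') : S = S' := by
  rw [← det hS, ← det hS', h]


section Steps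

lemma symmDiff_erase_of_mem {A T : Finset (Sym2 V)} {p : Sym2 V} (hp : p ∈ A) (hpt : p ∈ T) :
    symmDiff (A.erase p) T = insert p (symmDiff A T) := by
  ext x
  simp only [Finset.mem_symmDiff, Finset.mem_erase, Finset.mem_insert]
  rcases eq_or_ne x p with rfl | hx <;> tauto

lemma symmDiff_erase_of_not_mem {A T : Finset (Sym2 V)} {p : Sym2 V} (hp : p ∈ A)
    (hpt : p ∉ T) : symmDiff (A.erase p) T = (symmDiff A T).erase p := by
  ext x
  simp only [Finset.mem_symmDiff, Finset.mem_erase]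
  rcases eq_or_ne x p with rfl | hx <;> tauto

lemma symmDiff_insert_of_mem {A T : Finset (Sym2 V)} {p : Sym2 V} (hp : p ∉ A) (hpt : p ∈ T) :
    symmDiff (insert p A) T = (symmDiff A T).erase p := by
  ext x
  simp only [Finset.mem_symmDiff, Finset.mem_erase, Finset.mem_insert]
  rcases eq_or_ne x p with rfl | hx <;> tauto

lemma symmDiff_insert_of_not_mem {A T : Finset (Sym2 V)} {p : Sym2 V} (hp : p ∉ A)
    (hpt : p ∉ T) : symmDiff (insert p A) T = insert p (symmDiff A T) := by
  ext x
  simp only [Finset.mem_symmDiff, Finset.mem_erase, Finset.mem_insert]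
  rcases eq_or_ne x p with rfl | hx <;> tauto

/-- Each SCJ step changes the symmetric difference with any target by exactly one. -/
lemma step_card {G G' : Genome V} (h : SCJStep G G') (T : Finset (Sym2 V)) :
    (symmDiff G'.adj T).card = (symmDiff G.adj T).card + 1 ∨
    (symmDiff G.adj T).card = (symmDiff G'.adj T).card + 1 := by
  obtain ⟨p, hcut | hjoin⟩ := h
  · obtain ⟨hpA, hG'⟩ := hcut
    by_cases hpt : p ∈ T
    · left
      rw [hG', symmDiff_erase_of_mem hpA hpt,
        Finset.card_insert_of_notMem (by simp [Finset.mem_symmDiff]; tauto)]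
    · right
      rw [hG', symmDiff_erase_of_not_mem hpA hpt,
        Finset.card_erase_of_mem (by simp [Finset.mem_symmDiff]; tauto), Nat.sub_add_cancel]
      rw [Finset.one_le_card]
      exact ⟨p, by simp [Finset.mem_symmDiff]; tauto⟩
  · obtain ⟨hpA, hG'⟩ := hjoin
    by_cases hpt : p ∈ T
    · right
      rw [hG', symmDiff_insert_of_mem hpA hpt,
        Finset.card_erase_of_mem (by simp [Finset.mem_symmDiff]; tauto), Nat.sub_add_cancel]
      rw [Finset.one_le_card]
      exact ⟨p, by simp [Finset.mem_symmDiff]; tauto⟩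
    · left
      rw [hG', symmDiff_insert_of_not_mem hpA hpt,
        Finset.card_insert_of_notMem (by simp [Finset.mem_symmDiff]; tauto)]

/-- A strictly decreasing SCJ step w.r.t. a target classifies as a useful cut or join. -/
lemma step_classify {G G' : Genome V} {T : Finset (Sym2 V)} (h : SCJStep G G')
    (hlt : (symmDiff G'.adj T).card < (symmDiff G.adj T).card) :
    ∃ p, (p ∈ G.adj ∧ p ∉ T ∧ G'.adj = G.adj.erase p) ∨
      (p ∉ G.adj ∧ p ∈ T ∧ G'.adj = insert p G.adj) := by
  obtain ⟨p, hcut | hjoin⟩ := h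
  · obtain ⟨hpA, hG'⟩ := hcut
    refine ⟨p, Or.inl ⟨hpA, ?_, hG'⟩⟩
    intro hpt
    rw [hG', symmDiff_erase_of_mem hpA hpt,
      Finset.card_insert_of_notMem (by simp [Finset.mem_symmDiff]; tauto)] at hlt
    omega
  · obtain ⟨hpA, hG'⟩ := hjoin
    refine ⟨p, Or.inr ⟨hpA, ?_, hG'⟩⟩
    by_contra hpt
    rw [hG', symmDiff_insert_of_not_mem hpA hpt,
      Finset.card_insert_of_notMem (by simp [Finset.mem_symmDiff]; tauto)] at hlt
    omega

lemma card_symmDiff_triangle (A B C : Finset (Sym2 V)) :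
    (symmDiff A C).card ≤ (symmDiff A B).card + (symmDiff B C).card :=
  le_trans (Finset.card_le_card (symmDiff_triangle A B C)) (Finset.card_union_le _ _)

/-- Lower bound: the length of any scenario exceeds the symmetric-difference size. -/
lemma scenario_length_lb :
    ∀ {L : List (Genome V)} {Ga Gb : Genome V}, IsScenario Ga Gb L →
      (symmDiff Ga.adj Gb.adj).card + 1 ≤ L.length := by
  intro L
  induction L with
  | nil => intro Ga Gb h; simp [IsScenario] at h
  | cons G t ih =>
    intro Ga Gb h
    obtain ⟨hhead, hlast, hchain⟩ := h
    have hGa : Ga = G := by simpa using hhead.symm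
    subst hGa
    match t with
    | [] =>
      have : Ga = Gb := by simpa [List.getLast?] using hlast
      subst this
      simp [symmDiff_self]
    | G' :: t' =>
      rw [List.Chain', List.isChain_cons_cons] at hchain
      have hscen : IsScenario G' Gb (G' :: t') := by
        refine ⟨rfl, ?_, hchain.2⟩
        rwa [List.getLast?_cons_cons] at hlast
      have h1 := ih hscen
      have hstep : (symmDiff Ga.adj G'.adj).card = 1 := by
        obtain ⟨p, hcut | hjoin⟩ := hchain.1
        · obtain ⟨hpA, hG'⟩ := hcut
          rw [hG', symmDiff_comm, symmDiff_erase_of_mem hpA hpA]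
          simp [symmDiff_self]
        · obtain ⟨hpA, hG'⟩ := hjoin
          rw [hG', symmDiff_comm, symmDiff_insert_of_not_mem hpA hpA]
          simp [symmDiff_self]
      have := card_symmDiff_triangle Ga.adj G'.adj Gb.adj
      simp only [List.length_cons] at *
      omega

end Steps


section Forward

/-- The set of operation indices performed before time `s`, for the order `c`
(where `c j` is the time at which operation `j` is performed). -/
def DSet {n : ℕ} (c : Equiv.Perm (Fin n)) (s : ℕ) : Finset ℕ :=
  (Finset.univ.filter (fun j : Fin n => (c j : ℕ) < s)).image Fin.val

lemma mem_DSet {n : ℕ} {c : Equiv.Perm (Fin n)} {s m : ℕ} :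
    m ∈ DSet c s ↔ ∃ h : m < n, (c ⟨m, h⟩ : ℕ) < s := by
  simp only [DSet, Finset.mem_image, Finset.mem_filter, Finset.mem_univ, true_and]
  constructor
  · rintro ⟨a, ha, rfl⟩
    exact ⟨a.isLt, by simpa [Fin.eta] using ha⟩
  · rintro ⟨h, hlt⟩
    exact ⟨⟨m, h⟩, hlt, rfl⟩

lemma DSet_subset_range {n : ℕ} (c : Equiv.Perm (Fin n)) (s : ℕ) :
    DSet c s ⊆ Finset.range n := by
  intro m hm
  obtain ⟨h, _⟩ := mem_DSet.mp hm
  exact Finset.mem_range.mpr h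

lemma DSet_zero {n : ℕ} (c : Equiv.Perm (Fin n)) : DSet c 0 = ∅ := by
  ext m; simp [mem_DSet]

lemma DSet_top {n : ℕ} (c : Equiv.Perm (Fin n)) : DSet c n = Finset.range n := by
  ext m
  simp only [mem_DSet, Finset.mem_range]
  exact ⟨fun ⟨h, _⟩ => h, fun h => ⟨h, (c ⟨m, h⟩).isLt⟩⟩

lemma alt_lt {n : ℕ} {c : Equiv.Perm (Fin n)} (hc : IsAltPerm c) (j j' : Fin n)
    (h : (j' : ℕ) = (j : ℕ) + 1) :
    ((j : ℕ) % 2 = 0 → c j < c j') ∧ ((j : ℕ) % 2 = 1 → c j' < c j) := by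
  have hh : (j : ℕ) + 1 < n := h ▸ j'.isLt
  have h1 := hc (j : ℕ) hh
  have e2 : (⟨(j : ℕ) + 1, hh⟩ : Fin n) = j' := Fin.ext h.symm
  rw [e2] at h1
  simp only [Fin.eta] at h1
  constructor
  · intro h0; rwa [if_pos h0] at h1
  · intro h0; rwa [if_neg (by omega)] at h1

lemma good_DSet {n : ℕ} (hn : n % 2 = 1) {c : Equiv.Perm (Fin n)} (hc : IsAltPerm c)
    (s : ℕ) : Good (DSet c s) := by
  intro j hj hj1
  obtain ⟨hjn, hcj⟩ := mem_DSet.mp hj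
  obtain ⟨i, rfl⟩ : ∃ i, j = i + 1 := ⟨j - 1, by omega⟩
  have hj1n : i + 1 + 1 < n := by omega
  have h1 := (alt_lt hc ⟨i, by omega⟩ ⟨i + 1, hjn⟩ rfl).1 (by simpa using by omega)
  have h2 := (alt_lt hc ⟨i + 1, hjn⟩ ⟨i + 1 + 1, hj1n⟩ rfl).2 (by simpa using hj1)
  rw [Fin.lt_def] at h1 h2
  constructor
  · exact mem_DSet.mpr ⟨by omega, by simpa using by omega⟩
  · exact mem_DSet.mpr ⟨hj1n, by omega⟩

lemma DSet_succ {n : ℕ} (c : Equiv.Perm (Fin n)) {s : ℕ} (hs : s < n) :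
    DSet c (s + 1) = insert ((c.symm ⟨s, hs⟩ : ℕ)) (DSet c s) := by
  ext m
  simp only [Finset.mem_insert, mem_DSet]
  constructor
  · rintro ⟨h, hlt⟩
    rcases eq_or_lt_of_le (Nat.lt_succ_iff.mp hlt) with heq | hlt'
    · left
      have he : c ⟨m, h⟩ = ⟨s, hs⟩ := Fin.ext heq
      rw [← he, Equiv.symm_apply_apply]
    · exact Or.inr ⟨h, hlt'⟩
  · rintro (heq | ⟨h, hlt⟩)
    · refine ⟨heq ▸ (c.symm ⟨s, hs⟩).isLt, ?_⟩
      subst heq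
      simp only [Fin.eta, Equiv.apply_symm_apply]
      omega
    · exact ⟨h, by omega⟩

lemma not_mem_DSet_self {n : ℕ} (c : Equiv.Perm (Fin n)) {s : ℕ} (hs : s < n) :
    (c.symm ⟨s, hs⟩ : ℕ) ∉ DSet c s := by
  intro hmem
  obtain ⟨h, hlt⟩ := mem_DSet.mp hmem
  rw [Fin.eta, Equiv.apply_symm_apply] at hlt
  exact lt_irrefl s hlt

/-- The scenario associated to an order `c` of the operations. -/
noncomputable def scen (n : ℕ) (c : Equiv.Perm (Fin n)) : List (Genome ℕ) :=
  (List.range (n + 1)).map (fun s => genOf n (DSet c s))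

lemma scen_length {n : ℕ} (c : Equiv.Perm (Fin n)) : (scen n c).length = n + 1 := by
  simp [scen]

lemma scen_getD {n : ℕ} (c : Equiv.Perm (Fin n)) {s : ℕ} (hs : s ≤ n) :
    (scen n c).getD s default = genOf n (DSet c s) := by
  rw [scen, List.getD_eq_getElem _ _ (by simpa using Nat.lt_succ_of_le hs)]
  simp

lemma scen_step {n : ℕ} (hn : n % 2 = 1) {c : Equiv.Perm (Fin n)} (hc : IsAltPerm c)
    {s : ℕ} (hs : s < n) :
    SCJStep (genOf n (DSet c s)) (genOf n (DSet c (s + 1))) := by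
  have hjn : ((c.symm ⟨s, hs⟩ : Fin n) : ℕ) < n := (c.symm ⟨s, hs⟩).isLt
  set j : ℕ := (c.symm ⟨s, hs⟩ : ℕ) with hj
  have hnot : j ∉ DSet c s := not_mem_DSet_self c hs
  have hins : DSet c (s + 1) = insert j (DSet c s) := DSet_succ c hs
  rcases Nat.even_or_odd j with he | ho
  · have h0 : j % 2 = 0 := Nat.even_iff.mp he
    refine ⟨op j, Or.inl ⟨?_, ?_⟩⟩
    · rw [genOf_adj (good_DSet hn hc s)]
      exact mem_adjOf.mpr ⟨hjn, by rw [if_pos h0]; exact hnot⟩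
    · rw [genOf_adj (good_DSet hn hc (s + 1)), genOf_adj (good_DSet hn hc s), hins,
        adjOf_insert_even h0]
  · have h0 : j % 2 = 1 := Nat.odd_iff.mp ho
    refine ⟨op j, Or.inr ⟨?_, ?_⟩⟩
    · rw [genOf_adj (good_DSet hn hc s)]
      intro hmem
      have := (mem_adjOf.mp hmem).2
      rw [if_neg (by omega)] at this
      exact hnot this
    · rw [genOf_adj (good_DSet hn hc (s + 1)), genOf_adj (good_DSet hn hc s), hins,
        adjOf_insert_odd h0 hjn hnot]

lemma scen_isScenario {n : ℕ} (hn : n % 2 = 1) {c : Equiv.Perm (Fin n)} (hc : IsAltPerm c)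
    {G1 G2 : Genome ℕ} (h1 : G1.adj = adjOf n ∅) (h2 : G2.adj = adjOf n (Finset.range n)) :
    IsScenario G1 G2 (scen n c) := by
  refine ⟨?_, ?_, ?_⟩
  · rw [scen, List.range_succ_eq_map]
    have : G1 = genOf n (DSet c 0) := by
      apply Genome.ext'
      rw [h1, genOf_adj (by rw [DSet_zero]; exact good_empty), DSet_zero]
    rw [this]
    rfl
  · rw [scen, List.getLast?_eq_getElem?]
    have : G2 = genOf n (DSet c n) := by
      apply Genome.ext'
      rw [h2, genOf_adj (by rw [DSet_top]; exact good_range n hn), DSet_top]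
    rw [this]
    simp
  · rw [scen, List.Chain', List.isChain_iff_getElem]
    intro i hi
    simp only [List.length_map, List.length_range] at hi
    have h1' : ((List.range (n+1)).map (fun s => genOf n (DSet c s))).get
        ⟨i, by simp; omega⟩ = genOf n (DSet c i) := by simp
    have h2' : ((List.range (n+1)).map (fun s => genOf n (DSet c s))).get
        ⟨i + 1, by simp; omega⟩ = genOf n (DSet c (i+1)) := by simp
    simp only [List.get_eq_getElem] at h1' h2'
    rw [h1', h2']
    exact scen_step hn hc (by omega)

end Forward


section Aux

lemma good_insert_even {S : Finset ℕ} (hS : Good S) {j : ℕ} (hj : j % 2 = 0) :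
    Good (insert j S) := by
  intro m hm hm1
  rcases Finset.mem_insert.mp hm with rfl | hmS
  · omega
  · obtain ⟨ha, hb⟩ := hS m hmS hm1
    exact ⟨Finset.mem_insert_of_mem ha, Finset.mem_insert_of_mem hb⟩

lemma good_insert_odd {S : Finset ℕ} (hS : Good S) {j : ℕ} (hj : j % 2 = 1)
    (hjm : j - 1 ∈ S) (hjp : j + 1 ∈ S) : Good (insert j S) := by
  intro m hm hm1
  rcases Finset.mem_insert.mp hm with rfl | hmS
  · exact ⟨Finset.mem_insert_of_mem hjm, Finset.mem_insert_of_mem hjp⟩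
  · obtain ⟨ha, hb⟩ := hS m hmS hm1
    exact ⟨Finset.mem_insert_of_mem ha, Finset.mem_insert_of_mem hb⟩

lemma mem_adjOf_empty {n : ℕ} {x : Sym2 ℕ} :
    x ∈ adjOf n ∅ ↔ ∃ j, j < n ∧ j % 2 = 0 ∧ x = op j := by
  constructor
  · intro h
    obtain ⟨j, hjn, hcond, rfl⟩ := mem_adjOf' h
    refine ⟨j, hjn, ?_, rfl⟩
    by_contra h0
    rw [if_neg h0] at hcond
    simp at hcond
  · rintro ⟨j, hjn, h0, rfl⟩
    exact mem_adjOf.mpr ⟨hjn, by rw [if_pos h0]; simp⟩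

lemma mem_adjOf_range {n : ℕ} {x : Sym2 ℕ} :
    x ∈ adjOf n (Finset.range n) ↔ ∃ j, j < n ∧ j % 2 = 1 ∧ x = op j := by
  constructor
  · intro h
    obtain ⟨j, hjn, hcond, rfl⟩ := mem_adjOf' h
    refine ⟨j, hjn, ?_, rfl⟩
    by_contra h0
    rw [if_pos (by omega)] at hcond
    exact hcond (Finset.mem_range.mpr hjn)
  · rintro ⟨j, hjn, h0, rfl⟩
    exact mem_adjOf.mpr ⟨hjn, by rw [if_neg (by omega)]; exact Finset.mem_range.mpr hjn⟩

lemma isAltPerm_of {n : ℕ} (c : Equiv.Perm (Fin n))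
    (H : ∀ (j j' : Fin n), (j' : ℕ) = (j : ℕ) + 1 →
      (((j : ℕ) % 2 = 0 → c j < c j') ∧ ((j : ℕ) % 2 = 1 → c j' < c j))) :
    IsAltPerm c := by
  intro i h
  have h2 := H ⟨i, by omega⟩ ⟨i + 1, h⟩ rfl
  simp only [Fin.val_mk] at h2
  split_ifs with h0
  · exact h2.1 h0
  · exact h2.2 (by omega)

lemma exists_altPerm (k : ℕ) (hk : 1 ≤ k) :
    ∃ c : Equiv.Perm (Fin (2 * k - 1)), IsAltPerm c := by
  have hinj : Function.Injective (fun i : Fin (2 * k - 1) =>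
      (⟨(i : ℕ) / 2 + ((i : ℕ) % 2) * k, by
        have := i.isLt
        rcases Nat.mod_two_eq_zero_or_one (i : ℕ) with h2 | h2 <;> rw [h2] <;>
          simp only [Nat.zero_mul, Nat.one_mul, zero_mul, one_mul] <;> omega⟩ :
        Fin (2 * k - 1))) := by
    intro a b h
    have ha := a.isLt
    have hb := b.isLt
    rw [Fin.mk.injEq] at h
    apply Fin.ext
    rcases Nat.mod_two_eq_zero_or_one (a : ℕ) with ha2 | ha2 <;>
      rcases Nat.mod_two_eq_zero_or_one (b : ℕ) with hb2 | hb2 <;>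
        rw [ha2, hb2] at h <;>
          simp only [Nat.zero_mul, Nat.one_mul, zero_mul, one_mul] at h <;> omega
  refine ⟨Equiv.ofBijective _ ((Finite.injective_iff_bijective).mp hinj), ?_⟩
  apply isAltPerm_of
  intro j j' hsucc
  have hj := j.isLt
  have hj' := j'.isLt
  have hap : ∀ i : Fin (2 * k - 1),
      (((Equiv.ofBijective _ ((Finite.injective_iff_bijective).mp hinj)) i : Fin (2 * k - 1)) : ℕ)
        = (i : ℕ) / 2 + ((i : ℕ) % 2) * k := fun i => rfl
  constructor <;> intro h0
  · rw [Fin.lt_def, hap, hap, h0, show (j' : ℕ) % 2 = 1 by omega]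
    simp only [Nat.zero_mul, Nat.one_mul, zero_mul, one_mul]
    omega
  · rw [Fin.lt_def, hap, hap, h0, show (j' : ℕ) % 2 = 0 by omega]
    simp only [Nat.zero_mul, Nat.one_mul, zero_mul, one_mul]
    omega

end Aux

section Surj

lemma surj_scen {k n : ℕ} (hk : 1 ≤ k) (hn : n = 2 * k - 1) {G1 G2 : Genome ℕ}
    (h1 : G1.adj = adjOf n ∅) (h2 : G2.adj = adjOf n (Finset.range n))
    (hcard : (symmDiff G1.adj G2.adj).card = n)
    {L : List (Genome ℕ)} (hL : IsScenario G1 G2 L) (hlen : L.length = n + 1) :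
    ∃ c : Equiv.Perm (Fin n), IsAltPerm c ∧ scen n c = L := by
  have hnodd : n % 2 = 1 := by omega
  obtain ⟨hhead, hlast, hchain⟩ := hL
  set H : ℕ → Genome ℕ := fun s => L.getD s default with hH
  have hstep : ∀ s, s < n → SCJStep (H s) (H (s + 1)) := by
    intro s hs
    have h' := List.isChain_iff_getElem.mp hchain s (by omega)
    rw [hH]
    simp only []
    rw [List.getD_eq_getElem _ _ (by omega), List.getD_eq_getElem _ _ (by omega)]
    simpa [List.get_eq_getElem] using h'
  have hH0 : H 0 = G1 := by
    match L, hlen with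
    | a :: t, _ =>
      simp only [List.head?_cons, Option.some.injEq] at hhead
      simpa [hH] using hhead
  have hHn : H n = G2 := by
    rw [List.getLast?_eq_getElem?] at hlast
    rw [hlen] at hlast
    simp only [Nat.add_sub_cancel] at hlast
    have hn' : n < L.length := by omega
    rw [List.getElem?_eq_getElem hn', Option.some.injEq] at hlast
    rw [hH]
    simp only []
    rw [List.getD_eq_getElem _ _ hn']
    exact hlast
  -- the symmetric difference to G2 decreases by exactly one at each step
  have hup : ∀ i, i ≤ n → (symmDiff (H (n - i)).adj G2.adj).card ≤ i := by
    intro i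
    induction i with
    | zero => intro _; simp [hHn, symmDiff_self]
    | succ i ih =>
      intro hi
      have hs : n - (i + 1) < n := by omega
      have h' := step_card (hstep _ hs) G2.adj
      have he : n - (i + 1) + 1 = n - i := by omega
      rw [he] at h'
      have := ih (by omega)
      omega
  have hdown : ∀ s, s ≤ n → n - s ≤ (symmDiff (H s).adj G2.adj).card := by
    intro s
    induction s with
    | zero => intro _; rw [hH0]; omega
    | succ s ih =>
      intro hs
      have h' := step_card (hstep s (by omega)) G2.adj
      have := ih (by omega)
      omega
  have hdelta : ∀ s, s ≤ n → (symmDiff (H s).adj G2.adj).card = n - s := by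
    intro s hs
    have h1' := hup (n - s) (by omega)
    rw [show n - (n - s) = s by omega] at h1'
    have h2' := hdown s hs
    omega
  -- the done-sets
  set Dfun : ℕ → Finset ℕ := fun s => (Finset.range n).filter
    (fun j => if j % 2 = 0 then op j ∉ (H s).adj else op j ∈ (H s).adj) with hDfun
  have hDsub : ∀ s, Dfun s ⊆ Finset.range n := fun s => Finset.filter_subset _ _
  have hDdet : ∀ s, ∀ D ⊆ Finset.range n, (H s).adj = adjOf n D → Dfun s = D := by
    intro s D hsub hadj
    rw [hDfun]
    simp only [hadj]
    exact det hsub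
  have key : ∀ s, s ≤ n → (Good (Dfun s) ∧ (Dfun s).card = s ∧ (H s).adj = adjOf n (Dfun s))
      ∧ (∀ hs1 : 1 ≤ s, ∃ j, j < n ∧ j ∉ Dfun (s - 1) ∧ Dfun s = insert j (Dfun (s - 1))) := by
    intro s
    induction s with
    | zero =>
      intro _
      have hadj : (H 0).adj = adjOf n (∅ : Finset ℕ) := by rw [hH0, h1]
      have hD0 : Dfun 0 = ∅ := hDdet 0 ∅ (by simp) hadj
      exact ⟨⟨by rw [hD0]; exact good_empty, by rw [hD0]; simp, by rw [hD0]; exact hadj⟩,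
        by omega⟩
    | succ s ih =>
      intro hs
      obtain ⟨⟨hgood, hcardD, hadj⟩, -⟩ := ih (by omega)
      have hsn : s < n := by omega
      have hlt : (symmDiff (H (s + 1)).adj G2.adj).card < (symmDiff (H s).adj G2.adj).card := by
        rw [hdelta s (by omega), hdelta (s + 1) hs]
        omega
      obtain ⟨p, hcut | hjoin⟩ := step_classify (hstep s hsn) hlt
      · -- a cut
        obtain ⟨hpH, hpG2, hadj'⟩ := hcut
        rw [hadj] at hpH
        obtain ⟨j, hjn, hcond, rfl⟩ := mem_adjOf' hpH
        have hj0 : j % 2 = 0 := by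
          by_contra h0
          exact hpG2 (by rw [h2]; exact mem_adjOf_range.mpr ⟨j, hjn, by omega, rfl⟩)
        rw [if_pos hj0] at hcond
        have hDins : Dfun (s + 1) = insert j (Dfun s) := by
          apply hDdet
          · intro m hm
            rcases Finset.mem_insert.mp hm with rfl | hm'
            · exact Finset.mem_range.mpr hjn
            · exact hDsub s hm'
          · rw [hadj', hadj, adjOf_insert_even hj0]
        refine ⟨⟨?_, ?_, ?_⟩, fun _ => ⟨j, hjn, by simpa using hcond, by simpa using hDins⟩⟩
        · rw [hDins]; exact good_insert_even hgood hj0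
        · rw [hDins, Finset.card_insert_of_notMem hcond, hcardD]
        · rw [hDins, hadj', hadj, adjOf_insert_even hj0]
      · -- a join
        obtain ⟨hpH, hpG2, hadj'⟩ := hjoin
        rw [h2] at hpG2
        obtain ⟨j, hjn, hj1, rfl⟩ := mem_adjOf_range.mp hpG2
        have hcond : j ∉ Dfun s := by
          intro hjD
          exact hpH (by rw [hadj]; exact mem_adjOf.mpr ⟨hjn, by rw [if_neg (by omega)]; exact hjD⟩)
        have hj1n : j + 1 < n := by omega
        -- neighbours must have been cut already, by validity of the genome H (s+1)
        have hleft : j - 1 ∈ Dfun s := by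
          by_contra hnot
          have hmem : op (j - 1) ∈ (H (s + 1)).adj := by
            rw [hadj', hadj]
            exact Finset.mem_insert_of_mem
              (mem_adjOf.mpr ⟨by omega, by rw [if_pos (by omega)]; exact hnot⟩)
          have hmem2 : op j ∈ (H (s + 1)).adj := by rw [hadj']; exact Finset.mem_insert_self _ _
          refine (H (s + 1)).disj _ hmem _ hmem2 (fun hh => ?_) (j + 1) ?_ ?_
          · have := op_inj hh; omega
          · exact mem_op.mpr (Or.inr (by omega))
          · exact mem_op.mpr (Or.inl rfl)
        have hright : j + 1 ∈ Dfun s := by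
          by_contra hnot
          have hmem : op (j + 1) ∈ (H (s + 1)).adj := by
            rw [hadj', hadj]
            exact Finset.mem_insert_of_mem
              (mem_adjOf.mpr ⟨hj1n, by rw [if_pos (by omega)]; exact hnot⟩)
          have hmem2 : op j ∈ (H (s + 1)).adj := by rw [hadj']; exact Finset.mem_insert_self _ _
          refine (H (s + 1)).disj _ hmem _ hmem2 (fun hh => ?_) (j + 2) ?_ ?_
          · have := op_inj hh; omega
          · exact mem_op.mpr (Or.inl (by omega))
          · exact mem_op.mpr (Or.inr rfl)
        have hDins : Dfun (s + 1) = insert j (Dfun s) := by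
          apply hDdet
          · intro m hm
            rcases Finset.mem_insert.mp hm with rfl | hm'
            · exact Finset.mem_range.mpr hjn
            · exact hDsub s hm'
          · rw [hadj', hadj, adjOf_insert_odd hj1 hjn hcond]
        refine ⟨⟨?_, ?_, ?_⟩, fun _ => ⟨j, hjn, by simpa using hcond, by simpa using hDins⟩⟩
        · rw [hDins]; exact good_insert_odd hgood hj1 hleft hright
        · rw [hDins, Finset.card_insert_of_notMem hcond, hcardD]
        · rw [hDins, hadj', hadj, adjOf_insert_odd hj1 hjn hcond]
  have hg : ∀ s, s < n → ∃ j, j < n ∧ j ∉ Dfun s ∧ Dfun (s + 1) = insert j (Dfun s) := by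
    intro s hs
    have := (key (s + 1) (by omega)).2 (by omega)
    simpa using this
  choose jf hjlt hjnot hjeq using hg
  have hmono : ∀ t, t ≤ n → ∀ s, s ≤ t → Dfun s ⊆ Dfun t := by
    intro t
    induction t with
    | zero => intro _ s hs; rw [Nat.le_zero.mp hs]
    | succ t ih =>
      intro ht s hs
      by_cases hseq : s = t + 1
      · rw [hseq]
      · refine subset_trans (ih (by omega) s (by omega)) ?_
        rw [hjeq t (by omega)]
        exact Finset.subset_insert _ _
  set g : Fin n → Fin n := fun s => ⟨jf s s.isLt, hjlt s s.isLt⟩ with hgdef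
  have hginj : Function.Injective g := by
    intro a b hab
    by_contra hne
    rcases Ne.lt_or_gt (fun h : a = b => hne h) with hlt' | hlt'
    all_goals {
      first
      | (have hmem : jf a a.isLt ∈ Dfun (b : ℕ) := by
           refine hmono b (by omega) ((a : ℕ) + 1) (by omega) ?_
           rw [hjeq a a.isLt]
           exact Finset.mem_insert_self _ _
         have : jf a a.isLt = jf b b.isLt := by
           have := congrArg Fin.val hab
           simpa [hgdef] using this
         rw [this] at hmem
         exact hjnot b b.isLt hmem)
      | (have hmem : jf b b.isLt ∈ Dfun (a : ℕ) := by
           refine hmono a (by omega) ((b : ℕ) + 1) (by omega) ?_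
           rw [hjeq b b.isLt]
           exact Finset.mem_insert_self _ _
         have : jf a a.isLt = jf b b.isLt := by
           have := congrArg Fin.val hab
           simpa [hgdef] using this
         rw [← this] at hmem
         exact hjnot a a.isLt hmem)
    }
  set e : Equiv.Perm (Fin n) := Equiv.ofBijective g (Finite.injective_iff_bijective.mp hginj)
    with hedef
  set c : Equiv.Perm (Fin n) := e.symm with hcdef
  have hDset : ∀ s, s ≤ n → Dfun s = DSet c s := by
    intro s
    induction s with
    | zero =>
      intro _
      have h0 : (Dfun 0).card = 0 := ((key 0 (by omega)).1).2.1
      rw [Finset.card_eq_zero.mp h0, DSet_zero]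
    | succ s ih =>
      intro hs
      have hsn : s < n := by omega
      have hval : ((c.symm ⟨s, hsn⟩ : Fin n) : ℕ) = jf s hsn := by
        rw [hcdef, Equiv.symm_symm]
        rfl
      rw [hjeq s hsn, ih (by omega), DSet_succ c hsn, hval]
  have halt : IsAltPerm c := by
    apply isAltPerm_of
    intro j j' hsucc
    have hj'lt := j'.isLt
    have hgoodD : ∀ s, s ≤ n → Good (DSet c s) := by
      intro s hs
      rw [← hDset s hs]
      exact ((key s hs).1).1
    have main : ∀ m m' : Fin n, (m : ℕ) % 2 = 1 → ((m' : ℕ) = (m : ℕ) + 1 ∨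
        (m' : ℕ) + 1 = (m : ℕ)) → c m' < c m := by
      intro m m' hm1 hmm
      set t : ℕ := (c m : ℕ) with htdef
      have htn : t < n := (c m).isLt
      have hmem : (m : ℕ) ∈ DSet c (t + 1) := mem_DSet.mpr ⟨m.isLt, by
        simp only [Fin.eta]; omega⟩
      have hnb := hgoodD (t + 1) (by omega) (m : ℕ) hmem hm1
      have hmem' : (m' : ℕ) ∈ DSet c (t + 1) := by
        rcases hmm with h' | h'
        · have := hnb.2; rwa [← h'] at this
        · have := hnb.1; rwa [show (m : ℕ) - 1 = (m' : ℕ) by omega] at this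
      obtain ⟨hlt', hcm'⟩ := mem_DSet.mp hmem'
      simp only [Fin.eta] at hcm'
      have hne : c m' ≠ c m := fun hh => by
        have := c.injective hh
        have := congrArg Fin.val this
        omega
      rw [Fin.lt_def]
      have : (c m' : ℕ) ≠ t := fun hh => hne (Fin.ext (by omega))
      omega
    constructor
    · intro h0
      exact main j' j (by omega) (Or.inr (by omega))
    · intro h0
      exact main j j' h0 (Or.inl hsucc)
  refine ⟨c, halt, ?_⟩
  apply List.ext_getElem
  · rw [scen_length, hlen]
  · intro i hi1 hi2
    rw [scen_length] at hi1
    have hin : i ≤ n := by omega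
    have hs : (scen n c)[i] = genOf n (DSet c i) := by
      have := scen_getD c hin
      rwa [List.getD_eq_getElem _ _ (by rw [scen_length]; omega)] at this
    rw [hs]
    have hLi : L[i] = H i := by
      rw [hH]
      simp only []
      rw [List.getD_eq_getElem _ _ hi2]
    rw [hLi]
    apply Genome.ext'
    rw [genOf_adj (by rw [← hDset i hin]; exact ((key i hin).1).1), ← hDset i hin]
    exact (((key i hin).1).2.2).symm

end Surj


section Count

lemma h1_adjOf {k : ℕ} (hk : 1 ≤ k) :
    (Finset.Icc 1 k).image (fun t => s(2 * t - 1, 2 * t)) = adjOf (2 * k - 1) ∅ := by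
  ext x
  constructor
  · intro hx
    obtain ⟨t, ht, rfl⟩ := Finset.mem_image.mp hx
    rw [Finset.mem_Icc] at ht
    refine mem_adjOf_empty.mpr ⟨2 * (t - 1), by omega, by omega, ?_⟩
    simp only [op, Sym2.eq_iff]
    omega
  · intro hx
    obtain ⟨j, hjn, hj0, rfl⟩ := mem_adjOf_empty.mp hx
    refine Finset.mem_image.mpr ⟨j / 2 + 1, Finset.mem_Icc.mpr ⟨by omega, by omega⟩, ?_⟩
    simp only [op, Sym2.eq_iff]
    omega

lemma h2_adjOf {k : ℕ} (hk : 1 ≤ k) :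
    (Finset.Icc 1 (k - 1)).image (fun t => s(2 * t, 2 * t + 1)) =
      adjOf (2 * k - 1) (Finset.range (2 * k - 1)) := by
  ext x
  constructor
  · intro hx
    obtain ⟨t, ht, rfl⟩ := Finset.mem_image.mp hx
    rw [Finset.mem_Icc] at ht
    refine mem_adjOf_range.mpr ⟨2 * t - 1, by omega, by omega, ?_⟩
    simp only [op, Sym2.eq_iff]
    omega
  · intro hx
    obtain ⟨j, hjn, hj1, rfl⟩ := mem_adjOf_range.mp hx
    refine Finset.mem_image.mpr ⟨(j + 1) / 2, Finset.mem_Icc.mpr ⟨by omega, by omega⟩, ?_⟩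
    simp only [op, Sym2.eq_iff]
    omega

lemma card_adjOf_empty {k : ℕ} (hk : 1 ≤ k) : (adjOf (2 * k - 1) ∅).card = k := by
  have he : adjOf (2 * k - 1) ∅ = (Finset.range k).image (fun t => op (2 * t)) := by
    ext x
    rw [mem_adjOf_empty, Finset.mem_image]
    constructor
    · rintro ⟨j, hjn, hj0, rfl⟩
      exact ⟨j / 2, Finset.mem_range.mpr (by omega), congrArg op (by omega)⟩
    · rintro ⟨t, ht, rfl⟩
      rw [Finset.mem_range] at ht
      exact ⟨2 * t, by omega, by omega, rfl⟩
  rw [he, Finset.card_image_of_injective _ (fun a b hab => by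
    have := op_inj hab; omega), Finset.card_range]

lemma card_adjOf_range {k : ℕ} (hk : 1 ≤ k) :
    (adjOf (2 * k - 1) (Finset.range (2 * k - 1))).card = k - 1 := by
  have he : adjOf (2 * k - 1) (Finset.range (2 * k - 1)) =
      (Finset.range (k - 1)).image (fun t => op (2 * t + 1)) := by
    ext x
    rw [mem_adjOf_range, Finset.mem_image]
    constructor
    · rintro ⟨j, hjn, hj1, rfl⟩
      exact ⟨j / 2, Finset.mem_range.mpr (by omega), congrArg op (by omega)⟩
    · rintro ⟨t, ht, rfl⟩
      rw [Finset.mem_range] at ht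
      exact ⟨2 * t + 1, by omega, by omega, rfl⟩
  rw [he, Finset.card_image_of_injective _ (fun a b hab => by
    have := op_inj hab; omega), Finset.card_range]

lemma disj_adjOf {k : ℕ} :
    Disjoint (adjOf (2 * k - 1) ∅) (adjOf (2 * k - 1) (Finset.range (2 * k - 1))) := by
  rw [Finset.disjoint_left]
  intro x hx hx'
  obtain ⟨j, hjn, hj0, rfl⟩ := mem_adjOf_empty.mp hx
  obtain ⟨j', hjn', hj1, he⟩ := mem_adjOf_range.mp hx'
  have := op_inj he
  omega

lemma card_symmDiff_G {k : ℕ} (hk : 1 ≤ k) :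
    (symmDiff (adjOf (2 * k - 1) ∅) (adjOf (2 * k - 1) (Finset.range (2 * k - 1)))).card
      = 2 * k - 1 := by
  rw [Disjoint.symmDiff_eq_sup disj_adjOf, Finset.sup_eq_union,
    Finset.card_union_of_disjoint disj_adjOf, card_adjOf_empty hk, card_adjOf_range hk]
  omega

lemma dSCJ_eq {k : ℕ} (hk : 1 ≤ k) {G1 G2 : Genome ℕ}
    (h1 : G1.adj = adjOf (2 * k - 1) ∅)
    (h2 : G2.adj = adjOf (2 * k - 1) (Finset.range (2 * k - 1))) :
    dSCJ G1 G2 = 2 * k - 1 := by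
  obtain ⟨c0, hc0⟩ := exists_altPerm k hk
  have hmem : (2 * k - 1) ∈ {m | ∃ L, IsScenario G1 G2 L ∧ L.length = m + 1} :=
    ⟨scen (2 * k - 1) c0, scen_isScenario (by omega) hc0 h1 h2, scen_length c0⟩
  apply le_antisymm
  · exact Nat.sInf_le hmem
  · apply le_csInf ⟨_, hmem⟩
    rintro m ⟨L, hL, hlen⟩
    have hlb := scenario_length_lb hL
    rw [hlen] at hlb
    have hc : (symmDiff G1.adj G2.adj).card = 2 * k - 1 := by
      rw [h1, h2]; exact card_symmDiff_G hk
    omega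

lemma scen_inj {n : ℕ} (hn : n % 2 = 1) {c c' : Equiv.Perm (Fin n)}
    (hc : IsAltPerm c) (hc' : IsAltPerm c') (h : scen n c = scen n c') : c = c' := by
  have hD : ∀ s, s ≤ n → DSet c s = DSet c' s := by
    intro s hs
    have hgd : (scen n c).getD s default = (scen n c').getD s default := by rw [h]
    rw [scen_getD c hs, scen_getD c' hs] at hgd
    have hadj : adjOf n (DSet c s) = adjOf n (DSet c' s) := by
      rw [← genOf_adj (good_DSet hn hc s), ← genOf_adj (good_DSet hn hc' s), hgd]
    exact adjOf_inj (DSet_subset_range c s) (DSet_subset_range c' s) hadj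
  apply Equiv.ext
  intro j
  have hiff : ∀ s, s ≤ n → ((c j : ℕ) < s ↔ (c' j : ℕ) < s) := by
    intro s hs
    constructor <;> intro hlt
    · have hmem : (j : ℕ) ∈ DSet c s := mem_DSet.mpr ⟨j.isLt, by simpa [Fin.eta] using hlt⟩
      rw [hD s hs] at hmem
      obtain ⟨h', hlt'⟩ := mem_DSet.mp hmem
      simpa [Fin.eta] using hlt'
    · have hmem : (j : ℕ) ∈ DSet c' s := mem_DSet.mpr ⟨j.isLt, by simpa [Fin.eta] using hlt⟩
      rw [← hD s hs] at hmem
      obtain ⟨h', hlt'⟩ := mem_DSet.mp hmem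
      simpa [Fin.eta] using hlt'
  have ha := hiff ((c' j : ℕ) + 1) (by have := (c' j).isLt; omega)
  have hb := hiff ((c j : ℕ) + 1) (by have := (c j).isLt; omega)
  exact Fin.ext (by omega)

end Count

end MShape

/-- For the pair of genomes forming a single M-shaped path with `k ≥ 1`
adjacencies in `G1` (extremities `1, …, 2k`, `Π1 = {{2t-1, 2t} : 1 ≤ t ≤ k}`,
`Π2 = {{2t, 2t+1} : 1 ≤ t ≤ k-1}`), the number of most parsimonious SCJ scenarios from
`G1` to `G2` equals `A (2k-1)`, the number of alternating permutations of size `2k-1`. -/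
theorem mShaped_count (k : ℕ) (hk : 1 ≤ k) (G1 G2 : Genome ℕ)
    (h1 : G1.adj = (Finset.Icc 1 k).image fun t => s(2 * t - 1, 2 * t))
    (h2 : G2.adj = (Finset.Icc 1 (k - 1)).image fun t => s(2 * t, 2 * t + 1)) :
    NumMPS G1 G2 = altPermCount (2 * k - 1) := by
  have h1' : G1.adj = MShape.adjOf (2 * k - 1) ∅ := h1.trans (MShape.h1_adjOf hk)
  have h2' : G2.adj = MShape.adjOf (2 * k - 1) (Finset.range (2 * k - 1)) :=
    h2.trans (MShape.h2_adjOf hk)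
  have hnodd : (2 * k - 1) % 2 = 1 := by omega
  have hd : dSCJ G1 G2 = 2 * k - 1 := MShape.dSCJ_eq hk h1' h2'
  have hcard : (symmDiff G1.adj G2.adj).card = 2 * k - 1 := by
    rw [h1', h2']; exact MShape.card_symmDiff_G hk
  have hmps : ∀ L, IsMPS G1 G2 L ↔ (IsScenario G1 G2 L ∧ L.length = (2 * k - 1) + 1) := by
    intro L
    simp only [IsMPS, hd]
  have hbij : Function.Bijective (fun c : {c : Equiv.Perm (Fin (2 * k - 1)) // IsAltPerm c} =>
      (⟨MShape.scen (2 * k - 1) c.1, (hmps _).mpr ⟨MShape.scen_isScenario hnodd c.2 h1' h2',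
        MShape.scen_length c.1⟩⟩ : {L // IsMPS G1 G2 L})) := by
    constructor
    · rintro ⟨c, hc⟩ ⟨c', hc'⟩ hcc
      simp only [Subtype.mk.injEq] at hcc ⊢
      exact MShape.scen_inj hnodd hc hc' hcc
    · rintro ⟨L, hL⟩
      obtain ⟨hsc, hlen⟩ := (hmps L).mp hL
      obtain ⟨c, hca, hcs⟩ := MShape.surj_scen hk rfl h1' h2' hcard hsc hlen
      exact ⟨⟨c, hca⟩, Subtype.ext hcs⟩
  have hn1 : NumMPS G1 G2 = Nat.card {L // IsMPS G1 G2 L} := by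
    rw [NumMPS, ← Nat.card_coe_set_eq]
    rfl
  rw [hn1, Nat.card_congr (Equiv.ofBijective _ hbij).symm, altPermCount]
end

section
/- For every i ≥ 0, consider the pair of genomes forming a single W-shaped path with i adjacencies in G1: on extremities x_0, x_1, …, x_{2i+1}, take Π1 = {{x_{2j-1}, x_{2j}} : 1 ≤ j ≤ i} and Π2 = {{x_{2j}, x_{2j+1}} : 0 ≤ j ≤ i}. Then the number of most parsimonious SCJ scenarios from G1 to G2 equals A_{2i+1}, the number of alternating permutations of size 2i+1. -/
variable {V : Type*} [DecidableEq V]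

namespace WS

theorem Genome.ext' {V : Type*} {G G' : Genome V} (h : G.adj = G'.adj) : G = G' := by
  cases G; cases G'; simpa using h

/-- adjacency of operation `k`. -/
def sF {n : ℕ} (k : Fin n) : Sym2 ℕ := s(k.1, k.1 + 1)

theorem sF_inj {n : ℕ} : Function.Injective (sF (n := n)) := by
  intro a b h
  rw [sF, sF, Sym2.eq_iff] at h
  have : a.1 = b.1 := by omega
  exact Fin.ext this

/-- order validity (each join after neighboring cuts), with positions `σ : op → step`. -/
def Valid {n : ℕ} (σ : Equiv.Perm (Fin n)) : Prop :=
  ∀ j : ℕ, ∀ h : j + 1 < n,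
    if j % 2 = 0 then σ ⟨j + 1, h⟩ < σ ⟨j, by omega⟩
    else σ ⟨j, by omega⟩ < σ ⟨j + 1, h⟩

/-- set of operations whose adjacency is present at time `t`. -/
def Fset {n : ℕ} (σ : Equiv.Perm (Fin n)) (t : ℕ) : Finset (Fin n) :=
  Finset.univ.filter (fun k => if k.1 % 2 = 0 then (σ k).1 < t else t ≤ (σ k).1)

def bAdj {n : ℕ} (σ : Equiv.Perm (Fin n)) (t : ℕ) : Finset (Sym2 ℕ) :=
  (Fset σ t).image sF

theorem mem_bAdj {n : ℕ} {σ : Equiv.Perm (Fin n)} {t : ℕ} {k : Fin n} :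
    sF k ∈ bAdj σ t ↔ (if k.1 % 2 = 0 then (σ k).1 < t else t ≤ (σ k).1) := by
  constructor
  · rintro h
    obtain ⟨l, hl, he⟩ := Finset.mem_image.mp h
    rw [Fset, Finset.mem_filter] at hl
    cases sF_inj he; exact hl.2
  · intro h
    exact Finset.mem_image_of_mem _ (by rw [Fset, Finset.mem_filter]; exact ⟨Finset.mem_univ _, h⟩)

theorem bGen_not_isDiag {n : ℕ} (σ : Equiv.Perm (Fin n)) (t : ℕ) :
    ∀ p ∈ bAdj σ t, ¬ p.IsDiag := by
  intro p hp
  obtain ⟨k, _, rfl⟩ := Finset.mem_image.mp hp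
  rw [sF, Sym2.isDiag_iff_proj_eq]
  omega

theorem not_adjacent_mem {n : ℕ} {σ : Equiv.Perm (Fin n)} (hσ : Valid σ) {t : ℕ}
    {k l : Fin n} (h : l.1 = k.1 + 1) (hk : k ∈ Fset σ t) (hl : l ∈ Fset σ t) : False := by
  have hn : k.1 + 1 < n := by omega
  have hv := hσ k.1 hn
  have e1 : (⟨k.1, by omega⟩ : Fin n) = k := rfl
  have e2 : (⟨k.1 + 1, hn⟩ : Fin n) = l := Fin.ext h.symm
  rw [e1, e2] at hv
  rw [Fset, Finset.mem_filter] at hk hl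
  have hk2 := hk.2
  have hl2 := hl.2
  by_cases hk0 : k.1 % 2 = 0
  · have hl0 : ¬ (l.1 % 2 = 0) := by omega
    rw [if_pos hk0] at hk2 hv
    rw [if_neg hl0] at hl2
    have : (σ l).1 < (σ k).1 := hv
    omega
  · have hl0 : l.1 % 2 = 0 := by omega
    rw [if_neg hk0] at hk2 hv
    rw [if_pos hl0] at hl2
    have : (σ k).1 < (σ l).1 := hv
    omega

theorem bGen_disj {n : ℕ} (σ : Equiv.Perm (Fin n)) (hσ : Valid σ) (t : ℕ) :
    ∀ p ∈ bAdj σ t, ∀ q ∈ bAdj σ t, p ≠ q → ∀ x, x ∈ p → x ∉ q := by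
  intro p hp q hq hpq x hxp hxq
  obtain ⟨k, hk, rfl⟩ := Finset.mem_image.mp hp
  obtain ⟨l, hl, rfl⟩ := Finset.mem_image.mp hq
  have hkl : k.1 ≠ l.1 := fun h => hpq (congrArg sF (Fin.ext h))
  rw [sF, Sym2.mem_iff] at hxp hxq
  have hc : l.1 = k.1 + 1 ∨ k.1 = l.1 + 1 := by omega
  rcases hc with h | h
  · exact not_adjacent_mem hσ h hk hl
  · exact not_adjacent_mem hσ h hl hk

/-- the genome at time `t`. -/
def bGen {n : ℕ} (σ : Equiv.Perm (Fin n)) (hσ : Valid σ) (t : ℕ) : Genome ℕ :=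
  ⟨bAdj σ t, bGen_not_isDiag σ t, bGen_disj σ hσ t⟩

def bList {n : ℕ} (σ : Equiv.Perm (Fin n)) (hσ : Valid σ) : List (Genome ℕ) :=
  (List.range (n + 1)).map (bGen σ hσ)

theorem Fset_succ_even {n : ℕ} (σ : Equiv.Perm (Fin n)) {t : ℕ} (ht : t < n)
    (h0 : (σ.symm ⟨t, ht⟩).1 % 2 = 0) :
    Fset σ (t + 1) = insert (σ.symm ⟨t, ht⟩) (Fset σ t) := by
  set k0 := σ.symm ⟨t, ht⟩ with hk0
  have hσk0 : σ k0 = ⟨t, ht⟩ := Equiv.apply_symm_apply σ _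
  ext k
  rw [Finset.mem_insert]
  by_cases hk : k = k0
  · subst hk
    constructor
    · intro _; exact Or.inl rfl
    · intro _
      simp only [Fset, Finset.mem_filter, Finset.mem_univ, true_and, if_pos h0, hσk0]
      exact Nat.lt_succ_self t
  · have hne : (σ k).1 ≠ t := fun h => hk (by
      have h' : σ k = ⟨t, ht⟩ := Fin.ext h
      rw [hk0, ← h', Equiv.symm_apply_apply])
    simp only [Fset, Finset.mem_filter, Finset.mem_univ, true_and]
    constructor
    · intro h; right; split_ifs at h ⊢ <;> omega
    · rintro (h | h)
      · exact absurd h hk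
      · split_ifs at h ⊢ <;> omega

theorem Fset_succ_odd {n : ℕ} (σ : Equiv.Perm (Fin n)) {t : ℕ} (ht : t < n)
    (h0 : ¬ (σ.symm ⟨t, ht⟩).1 % 2 = 0) :
    Fset σ (t + 1) = (Fset σ t).erase (σ.symm ⟨t, ht⟩) := by
  set k0 := σ.symm ⟨t, ht⟩ with hk0
  have hσk0 : σ k0 = ⟨t, ht⟩ := Equiv.apply_symm_apply σ _
  ext k
  rw [Finset.mem_erase]
  by_cases hk : k = k0
  · subst hk
    constructor
    · intro h
      exfalso
      simp only [Fset, Finset.mem_filter, Finset.mem_univ, true_and, if_neg h0, hσk0] at h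
      exact Nat.not_succ_le_self t h
    · rintro ⟨h, -⟩
      exact absurd rfl h
  · have hne : (σ k).1 ≠ t := fun h => hk (by
      have h' : σ k = ⟨t, ht⟩ := Fin.ext h
      rw [hk0, ← h', Equiv.symm_apply_apply])
    simp only [Fset, Finset.mem_filter, Finset.mem_univ, true_and, hk]
    constructor
    · intro h; refine ⟨hk, ?_⟩; split_ifs at h ⊢ <;> omega
    · rintro ⟨-, h⟩; split_ifs at h ⊢ <;> omega

theorem mem_Fset_self_odd {n : ℕ} (σ : Equiv.Perm (Fin n)) {t : ℕ} (ht : t < n)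
    (h0 : ¬ (σ.symm ⟨t, ht⟩).1 % 2 = 0) : σ.symm ⟨t, ht⟩ ∈ Fset σ t := by
  have hσk0 : σ (σ.symm ⟨t, ht⟩) = ⟨t, ht⟩ := Equiv.apply_symm_apply σ _
  simp only [Fset, Finset.mem_filter, Finset.mem_univ, true_and, if_neg h0, hσk0, le_refl]

theorem not_mem_Fset_self_even {n : ℕ} (σ : Equiv.Perm (Fin n)) {t : ℕ} (ht : t < n)
    (h0 : (σ.symm ⟨t, ht⟩).1 % 2 = 0) : σ.symm ⟨t, ht⟩ ∉ Fset σ t := by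
  have hσk0 : σ (σ.symm ⟨t, ht⟩) = ⟨t, ht⟩ := Equiv.apply_symm_apply σ _
  simp only [Fset, Finset.mem_filter, Finset.mem_univ, true_and, if_pos h0, hσk0]
  omega

theorem SCJStep_bGen {n : ℕ} (σ : Equiv.Perm (Fin n)) (hσ : Valid σ) {t : ℕ} (ht : t < n) :
    SCJStep (bGen σ hσ t) (bGen σ hσ (t + 1)) := by
  set k0 := σ.symm ⟨t, ht⟩ with hk0
  refine ⟨sF k0, ?_⟩
  by_cases h0 : k0.1 % 2 = 0
  · refine Or.inr ⟨?_, ?_⟩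
    · show sF k0 ∉ bAdj σ t
      intro h
      obtain ⟨l, hl, he⟩ := Finset.mem_image.mp h
      cases sF_inj he
      exact not_mem_Fset_self_even σ ht h0 hl
    · show bAdj σ (t + 1) = insert (sF k0) (bAdj σ t)
      rw [bAdj, bAdj, Fset_succ_even σ ht h0, Finset.image_insert]
  · refine Or.inl ⟨?_, ?_⟩
    · exact Finset.mem_image_of_mem _ (mem_Fset_self_odd σ ht h0)
    · show bAdj σ (t + 1) = (bAdj σ t).erase (sF k0)
      rw [bAdj, bAdj, Fset_succ_odd σ ht h0, Finset.image_erase sF_inj]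

theorem bList_chain {n : ℕ} (σ : Equiv.Perm (Fin n)) (hσ : Valid σ) :
    (bList σ hσ).Chain' SCJStep := by
  rw [bList, List.Chain', List.isChain_map, List.isChain_range_succ]
  intro m hm
  exact SCJStep_bGen σ hσ hm

theorem bList_length {n : ℕ} (σ : Equiv.Perm (Fin n)) (hσ : Valid σ) :
    (bList σ hσ).length = n + 1 := by
  simp [bList]

theorem bList_getElem {n : ℕ} (σ : Equiv.Perm (Fin n)) (hσ : Valid σ) {t : ℕ}
    (ht : t < n + 1) :
    (bList σ hσ)[t]'(by rw [bList_length]; exact ht) = bGen σ hσ t := by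
  simp [bList]

theorem bList_head {n : ℕ} (σ : Equiv.Perm (Fin n)) (hσ : Valid σ) :
    (bList σ hσ).head? = some (bGen σ hσ 0) := by
  rw [List.head?_eq_getElem?, List.getElem?_eq_getElem (by rw [bList_length]; omega),
    bList_getElem σ hσ (by omega)]

theorem bList_getLast {n : ℕ} (σ : Equiv.Perm (Fin n)) (hσ : Valid σ) :
    (bList σ hσ).getLast? = some (bGen σ hσ n) := by
  rw [List.getLast?_eq_getElem?, bList_length, Nat.add_sub_cancel,
    List.getElem?_eq_getElem (by rw [bList_length]; omega), bList_getElem σ hσ (by omega)]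

-- ===== endpoints =====

theorem Fset_zero {n : ℕ} (σ : Equiv.Perm (Fin n)) :
    Fset σ 0 = Finset.univ.filter (fun k : Fin n => ¬ k.1 % 2 = 0) := by
  ext k
  simp only [Fset, Finset.mem_filter, Finset.mem_univ, true_and]
  split_ifs with h <;> simp [h]

theorem Fset_top {n : ℕ} (σ : Equiv.Perm (Fin n)) :
    Fset σ n = Finset.univ.filter (fun k : Fin n => k.1 % 2 = 0) := by
  ext k
  simp only [Fset, Finset.mem_filter, Finset.mem_univ, true_and]
  have h1 : (σ k).1 < n := (σ k).isLt
  split_ifs with h <;> simp [h] <;> omega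

theorem adj1_eq {i : ℕ} {G1 : Genome ℕ}
    (h1 : G1.adj = (Finset.Icc 1 i).image fun j => s(2 * j - 1, 2 * j)) :
    G1.adj = (Finset.univ.filter (fun k : Fin (2 * i + 1) => ¬ k.1 % 2 = 0)).image sF := by
  rw [h1]
  ext x
  simp only [Finset.mem_image, Finset.mem_filter, Finset.mem_univ, true_and, Finset.mem_Icc]
  constructor
  · rintro ⟨j, hj, rfl⟩
    refine ⟨⟨2 * j - 1, by omega⟩, by simp; omega, ?_⟩
    rw [sF]
    have e : 2 * j - 1 + 1 = 2 * j := by omega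
    simp only [e]
  · rintro ⟨k, hk, rfl⟩
    have hklt := k.isLt
    refine ⟨(k.1 + 1) / 2, by omega, ?_⟩
    rw [sF]
    have e1 : 2 * ((k.1 + 1) / 2) - 1 = k.1 := by omega
    have e2 : 2 * ((k.1 + 1) / 2) = k.1 + 1 := by omega
    rw [e1, e2]

theorem adj2_eq {i : ℕ} {G2 : Genome ℕ}
    (h2 : G2.adj = (Finset.Icc 0 i).image fun j => s(2 * j, 2 * j + 1)) :
    G2.adj = (Finset.univ.filter (fun k : Fin (2 * i + 1) => k.1 % 2 = 0)).image sF := by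
  rw [h2]
  ext x
  simp only [Finset.mem_image, Finset.mem_filter, Finset.mem_univ, true_and, Finset.mem_Icc]
  constructor
  · rintro ⟨j, hj, rfl⟩
    exact ⟨⟨2 * j, by omega⟩, by simp, rfl⟩
  · rintro ⟨k, hk, rfl⟩
    have hklt := k.isLt
    refine ⟨k.1 / 2, by omega, ?_⟩
    rw [sF]
    have e1 : 2 * (k.1 / 2) = k.1 := by omega
    rw [e1]

theorem bAdj_zero {i : ℕ} {G1 : Genome ℕ} (σ : Equiv.Perm (Fin (2 * i + 1)))
    (h1 : G1.adj = (Finset.Icc 1 i).image fun j => s(2 * j - 1, 2 * j)) :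
    bAdj σ 0 = G1.adj := by
  rw [bAdj, Fset_zero, adj1_eq h1]

theorem bAdj_top {i : ℕ} {G2 : Genome ℕ} (σ : Equiv.Perm (Fin (2 * i + 1)))
    (h2 : G2.adj = (Finset.Icc 0 i).image fun j => s(2 * j, 2 * j + 1)) :
    bAdj σ (2 * i + 1) = G2.adj := by
  rw [bAdj, Fset_top, adj2_eq h2]

theorem symm_adj_eq {i : ℕ} {G1 G2 : Genome ℕ}
    (h1 : G1.adj = (Finset.Icc 1 i).image fun j => s(2 * j - 1, 2 * j))
    (h2 : G2.adj = (Finset.Icc 0 i).image fun j => s(2 * j, 2 * j + 1)) :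
    symmDiff G1.adj G2.adj = (Finset.univ : Finset (Fin (2 * i + 1))).image sF := by
  rw [adj1_eq h1, adj2_eq h2]
  rw [← Finset.image_symmDiff _ _ sF_inj]
  congr 1
  have hdisj : Disjoint
      (Finset.univ.filter (fun k : Fin (2 * i + 1) => ¬ k.1 % 2 = 0))
      (Finset.univ.filter (fun k : Fin (2 * i + 1) => k.1 % 2 = 0)) := by
    rw [Finset.disjoint_left]
    intro a ha hb
    rw [Finset.mem_filter] at ha hb
    exact ha.2 hb.2
  rw [hdisj.symmDiff_eq_sup]
  rw [Finset.sup_eq_union, Finset.union_comm]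
  exact Finset.filter_union_filter_not_eq _ _

theorem card_symm_adj {i : ℕ} {G1 G2 : Genome ℕ}
    (h1 : G1.adj = (Finset.Icc 1 i).image fun j => s(2 * j - 1, 2 * j))
    (h2 : G2.adj = (Finset.Icc 0 i).image fun j => s(2 * j, 2 * j + 1)) :
    (symmDiff G1.adj G2.adj).card = 2 * i + 1 := by
  rw [symm_adj_eq h1 h2, Finset.card_image_of_injective _ sF_inj]
  simp

-- ===== generic step lemmas =====

theorem step_toggle {V : Type*} [DecidableEq V] {G G' : Genome V} (h : SCJStep G G') :
    ∃ p, ∀ x, x ≠ p → (x ∈ G.adj ↔ x ∈ G'.adj) := by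
  obtain ⟨p, h | h⟩ := h
  · exact ⟨p, fun x hx => by rw [h.2, Finset.mem_erase]; simp [hx]⟩
  · exact ⟨p, fun x hx => by rw [h.2, Finset.mem_insert]; simp [hx]⟩

theorem card_symm_le {α : Type*} [DecidableEq α] {s s' T : Finset α} {p : α}
    (h : ∀ x, x ≠ p → (x ∈ s ↔ x ∈ s')) :
    (symmDiff s T).card ≤ (symmDiff s' T).card + 1 := by
  have hsub : symmDiff s T ⊆ insert p (symmDiff s' T) := by
    intro x hx
    rcases eq_or_ne x p with rfl | hne
    · exact Finset.mem_insert_self _ _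
    · rw [Finset.mem_insert]
      right
      rw [Finset.mem_symmDiff] at hx ⊢
      rw [h x hne] at hx
      exact hx
  exact (Finset.card_le_card hsub).trans (Finset.card_insert_le _ _)

theorem toggle_erase {α : Type*} [DecidableEq α] {s s' T : Finset α} {p : α}
    (h : ∀ x, x ≠ p → (x ∈ s ↔ x ∈ s'))
    (hc : (symmDiff s' T).card + 1 = (symmDiff s T).card) :
    p ∈ symmDiff s T ∧ symmDiff s' T = (symmDiff s T).erase p := by
  have hmemiff : ∀ x, x ≠ p → (x ∈ symmDiff s T ↔ x ∈ symmDiff s' T) := by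
    intro x hx
    rw [Finset.mem_symmDiff, Finset.mem_symmDiff, h x hx]
  by_cases hp : p ∈ symmDiff s T
  · by_cases hp' : p ∈ symmDiff s' T
    · exfalso
      have he : symmDiff s T = symmDiff s' T := by
        ext x
        rcases eq_or_ne x p with rfl | hne
        · simp [hp, hp']
        · exact hmemiff x hne
      rw [he] at hc
      omega
    · refine ⟨hp, ?_⟩
      ext x
      rw [Finset.mem_erase]
      rcases eq_or_ne x p with rfl | hne
      · simp [hp']
      · rw [← hmemiff x hne]
        simp [hne]
  · exfalso
    have hsub : symmDiff s T ⊆ symmDiff s' T := by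
      intro x hx
      exact (hmemiff x (fun he => hp (he ▸ hx))).mp hx
    have := Finset.card_le_card hsub
    omega

theorem chain_bound {V : Type*} [DecidableEq V] (B : Genome V) :
    ∀ (L : List (Genome V)) (A : Genome V), L.head? = some A → L.getLast? = some B →
      L.Chain' SCJStep → (symmDiff A.adj B.adj).card < L.length := by
  intro L
  induction L with
  | nil => intro A hh _ _; simp at hh
  | cons A' L ih =>
    intro A hh hl hc
    have hA : A = A' := by simpa using hh.symm
    subst hA
    cases L with
    | nil =>
      have hB : B = A := by simpa using hl.symm
      subst hB
      simp [symmDiff_self]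
    | cons A'' tl =>
      have hstep : SCJStep A A'' := (List.isChain_cons_cons.mp hc).1
      have hrest := ih A'' rfl (by rwa [List.getLast?_cons_cons] at hl)
        (List.isChain_cons_cons.mp hc).2
      obtain ⟨p, hp⟩ := step_toggle hstep
      have := card_symm_le (T := B.adj) hp
      simp only [List.length_cons] at *
      omega

-- ===== a sample valid permutation and the distance =====

def f0 (i : ℕ) : Fin (2 * i + 1) → Fin (2 * i + 1) := fun k =>
  ⟨if k.1 % 2 = 0 then i + k.1 / 2 else k.1 / 2, by
    have := k.isLt; split_ifs <;> omega⟩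

theorem f0_inj (i : ℕ) : Function.Injective (f0 i) := by
  intro a b h
  have ha := a.isLt
  have hb := b.isLt
  have h' := congrArg Fin.val h
  simp only [f0] at h'
  apply Fin.ext
  split_ifs at h' <;> omega

noncomputable def σ0 (i : ℕ) : Equiv.Perm (Fin (2 * i + 1)) :=
  Equiv.ofBijective (f0 i) ((Fintype.bijective_iff_injective_and_card (f0 i)).mpr ⟨f0_inj i, rfl⟩)

theorem σ0_valid (i : ℕ) : Valid (σ0 i) := by
  intro j hj
  have e : ∀ (m : ℕ) (hm : m < 2 * i + 1),
      ((σ0 i) ⟨m, hm⟩).1 = if m % 2 = 0 then i + m / 2 else m / 2 := fun m hm => rfl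
  split_ifs with hje
  · rw [Fin.lt_def, e, e, if_pos hje, if_neg (by omega)]
    omega
  · rw [Fin.lt_def, e, e, if_neg hje, if_pos (by omega)]
    omega

theorem bList_scenario {i : ℕ} {G1 G2 : Genome ℕ}
    (h1 : G1.adj = (Finset.Icc 1 i).image fun j => s(2 * j - 1, 2 * j))
    (h2 : G2.adj = (Finset.Icc 0 i).image fun j => s(2 * j, 2 * j + 1))
    (σ : Equiv.Perm (Fin (2 * i + 1))) (hσ : Valid σ) :
    IsScenario G1 G2 (bList σ hσ) := by
  refine ⟨?_, ?_, bList_chain σ hσ⟩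
  · rw [bList_head]
    congr 1
    exact (Genome.ext' (show (bGen σ hσ 0).adj = G1.adj from bAdj_zero σ h1)).symm ▸ rfl
  · rw [bList_getLast]
    congr 1
    exact Genome.ext' (show (bGen σ hσ (2 * i + 1)).adj = G2.adj from bAdj_top σ h2)

theorem dSCJ_eq {i : ℕ} {G1 G2 : Genome ℕ}
    (h1 : G1.adj = (Finset.Icc 1 i).image fun j => s(2 * j - 1, 2 * j))
    (h2 : G2.adj = (Finset.Icc 0 i).image fun j => s(2 * j, 2 * j + 1)) :
    dSCJ G1 G2 = 2 * i + 1 := by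
  have hmem : (2 * i + 1) ∈ {m | ∃ L, IsScenario G1 G2 L ∧ L.length = m + 1} :=
    ⟨bList (σ0 i) (σ0_valid i), bList_scenario h1 h2 _ _, bList_length _ _⟩
  refine le_antisymm (Nat.sInf_le hmem) (le_csInf ⟨_, hmem⟩ ?_)
  rintro m ⟨L, ⟨hh, hl, hc⟩, hlen⟩
  have := chain_bound G2 L G1 hh hl hc
  rw [hlen, card_symm_adj h1 h2] at this
  omega

-- ===== structure of minimum-length scenarios =====

theorem bAdj_symm {n : ℕ} (σ : Equiv.Perm (Fin n)) (t : ℕ) :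
    bAdj σ t = symmDiff ((Finset.univ.filter fun k => t ≤ (σ k).1).image sF)
      ((Finset.univ.filter fun k : Fin n => k.1 % 2 = 0).image sF) := by
  rw [bAdj, ← Finset.image_symmDiff _ _ sF_inj]
  congr 1
  ext k
  simp only [Fset, Finset.mem_symmDiff, Finset.mem_filter, Finset.mem_univ, true_and]
  split_ifs with h <;> simp [h] <;> omega

theorem scenario_struct {i : ℕ} {G1 G2 : Genome ℕ}
    (h1 : G1.adj = (Finset.Icc 1 i).image fun j => s(2 * j - 1, 2 * j))
    (h2 : G2.adj = (Finset.Icc 0 i).image fun j => s(2 * j, 2 * j + 1))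
    {L : List (Genome ℕ)} (hsc : IsScenario G1 G2 L) (hlen : L.length = 2 * i + 1 + 1) :
    ∃ (σ : Equiv.Perm (Fin (2 * i + 1))) (hσ : Valid σ), L = bList σ hσ := by
  obtain ⟨hh, hl, hc⟩ := hsc
  have hg0 : L.getD 0 default = G1 := by
    have hlen0 : 0 < L.length := by omega
    rw [List.head?_eq_getElem?, List.getElem?_eq_getElem hlen0] at hh
    rw [List.getD_eq_getElem _ _ hlen0]
    exact Option.some_injective _ hh
  have hgn : L.getD (2 * i + 1) default = G2 := by
    rw [List.getLast?_eq_getElem?] at hl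
    have e : L.length - 1 = 2 * i + 1 := by omega
    rw [e, List.getElem?_eq_getElem (by omega)] at hl
    rw [List.getD_eq_getElem _ _ (by omega)]
    exact Option.some_injective _ hl
  have hstep : ∀ t, t + 1 < L.length →
      SCJStep (L.getD t default) (L.getD (t + 1) default) := by
    intro t ht
    have := List.isChain_iff_getElem.mp hc t (by omega)
    rw [List.getD_eq_getElem _ _ (by omega : t < L.length), List.getD_eq_getElem _ _ ht]
    simpa using this
  -- card of symmetric difference along the way
  have hub : ∀ t, t ≤ 2 * i + 1 →
      (symmDiff (L.getD t default).adj G2.adj).card ≤ 2 * i + 1 - t := by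
    intro t ht
    have hhd : (L.drop t).head? = some (L.getD t default) := by
      rw [List.head?_drop, List.getElem?_eq_getElem (by omega),
        List.getD_eq_getElem _ _ (by omega)]
    have hlst : (L.drop t).getLast? = some G2 := by
      rw [List.getLast?_eq_getElem?, List.length_drop, List.getElem?_drop]
      have e : t + (L.length - t - 1) = 2 * i + 1 := by omega
      rw [e, List.getElem?_eq_getElem (by omega), ← List.getD_eq_getElem L default (by omega),
        hgn]
    have := chain_bound G2 (L.drop t) (L.getD t default) hhd hlst
      (hc.suffix (List.drop_suffix t L))
    rw [List.length_drop, hlen] at this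
    omega
  have hstep_card : ∀ t, t < 2 * i + 1 →
      (symmDiff (L.getD t default).adj G2.adj).card ≤
        (symmDiff (L.getD (t + 1) default).adj G2.adj).card + 1 := by
    intro t ht
    obtain ⟨p, hp⟩ := step_toggle (hstep t (by omega))
    exact card_symm_le hp
  have hc0 : (symmDiff (L.getD 0 default).adj G2.adj).card = 2 * i + 1 := by
    rw [hg0, card_symm_adj h1 h2]
  have hlow : ∀ t, t ≤ 2 * i + 1 →
      2 * i + 1 ≤ (symmDiff (L.getD t default).adj G2.adj).card + t := by
    intro t
    induction t with
    | zero => intro _; omega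
    | succ t ih =>
      intro ht
      have ha := ih (by omega)
      have hb := hstep_card t (by omega)
      omega
  have hcard : ∀ t, t ≤ 2 * i + 1 →
      (symmDiff (L.getD t default).adj G2.adj).card = 2 * i + 1 - t := by
    intro t ht
    have := hub t ht
    have := hlow t ht
    omega
  have hex : ∀ t, t < 2 * i + 1 → ∃ p,
      p ∈ symmDiff (L.getD t default).adj G2.adj ∧
      symmDiff (L.getD (t + 1) default).adj G2.adj =
        (symmDiff (L.getD t default).adj G2.adj).erase p := by
    intro t ht
    obtain ⟨p, hp⟩ := step_toggle (hstep t (by omega))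
    have hcc : (symmDiff (L.getD (t + 1) default).adj G2.adj).card + 1 =
        (symmDiff (L.getD t default).adj G2.adj).card := by
      rw [hcard t (by omega), hcard (t + 1) (by omega)]
      omega
    exact ⟨p, toggle_erase hp hcc⟩
  choose! p hp1 hp2 using hex
  have hmono : ∀ a d, a + d ≤ 2 * i + 1 →
      symmDiff (L.getD (a + d) default).adj G2.adj ⊆
        symmDiff (L.getD a default).adj G2.adj := by
    intro a d
    induction d with
    | zero => intro _; exact subset_rfl
    | succ d ih =>
      intro h
      rw [show a + (d + 1) = (a + d) + 1 from rfl, hp2 (a + d) (by omega)]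
      exact (Finset.erase_subset _ _).trans (ih (by omega))
  have hex2 : ∀ t, t < 2 * i + 1 → ∃ k : Fin (2 * i + 1), sF k = p t := by
    intro t ht
    have hmem : p t ∈ symmDiff (L.getD 0 default).adj G2.adj := by
      have h0 := hmono 0 t (by omega)
      simp only [Nat.zero_add] at h0
      exact h0 (hp1 t ht)
    rw [hg0, symm_adj_eq h1 h2] at hmem
    obtain ⟨k, _, hk⟩ := Finset.mem_image.mp hmem
    exact ⟨k, hk⟩
  choose! kf hkf using hex2
  have hpne : ∀ a b, a < b → b < 2 * i + 1 → p a ≠ p b := by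
    intro a b hab hbN heq
    have hmem : p b ∈ symmDiff (L.getD b default).adj G2.adj := hp1 b hbN
    have hsub := hmono (a + 1) (b - (a + 1)) (by omega)
    rw [show a + 1 + (b - (a + 1)) = b by omega] at hsub
    have := hsub hmem
    rw [hp2 a (by omega)] at this
    exact (Finset.mem_erase.mp this).1 heq.symm
  have hfinj : Function.Injective (fun t : Fin (2 * i + 1) => kf t.1) := by
    intro a b h
    simp only at h
    have hpe : p a.1 = p b.1 := by
      rw [← hkf a.1 a.isLt, ← hkf b.1 b.isLt, h]
    by_contra hne
    have hne' : a.1 ≠ b.1 := fun he => hne (Fin.ext he)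
    rcases Nat.lt_or_ge a.1 b.1 with hlt | hge
    · exact hpne a.1 b.1 hlt b.isLt hpe
    · exact hpne b.1 a.1 (by omega) a.isLt hpe.symm
  have hfbij : Function.Bijective (fun t : Fin (2 * i + 1) => kf t.1) :=
    (Fintype.bijective_iff_injective_and_card _).mpr ⟨hfinj, rfl⟩
  set e := Equiv.ofBijective _ hfbij with he
  set σ := e.symm with hσdef
  have hσk : ∀ t (ht : t < 2 * i + 1), σ (kf t) = ⟨t, ht⟩ := by
    intro t ht
    exact Equiv.symm_apply_apply e ⟨t, ht⟩
  have hkiff : ∀ (t : ℕ) (ht : t < 2 * i + 1) (k : Fin (2 * i + 1)),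
      (σ k).1 = t ↔ k = kf t := by
    intro t ht k
    constructor
    · intro h
      have : σ k = σ (kf t) := by rw [hσk t ht]; exact Fin.ext h
      exact σ.injective this
    · intro h
      rw [h, hσk t ht]
  have hDt : ∀ t, t ≤ 2 * i + 1 →
      symmDiff (L.getD t default).adj G2.adj =
        (Finset.univ.filter fun k => t ≤ (σ k).1).image sF := by
    intro t
    induction t with
    | zero =>
      intro _
      rw [hg0, symm_adj_eq h1 h2, Finset.filter_true_of_mem (fun x _ => Nat.zero_le _)]
    | succ t ih =>
      intro ht
      rw [hp2 t (by omega), ih (by omega), ← hkf t (by omega), ← Finset.image_erase sF_inj]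
      congr 1
      ext k
      simp only [Finset.mem_erase, Finset.mem_filter, Finset.mem_univ, true_and]
      rw [Ne, ← hkiff t (by omega) k]
      omega
  have hAt : ∀ t, t ≤ 2 * i + 1 → (L.getD t default).adj = bAdj σ t := by
    intro t ht
    rw [bAdj_symm σ t, ← hDt t ht, ← adj2_eq h2, symmDiff_symmDiff_cancel_right]
  have hσvalid : Valid σ := by
    have key : ∀ (a b : Fin (2 * i + 1)), a.1 % 2 = 0 →
        (b.1 = a.1 + 1 ∨ a.1 = b.1 + 1) → (σ b).1 < (σ a).1 := by
      intro a b hae hadj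
      by_contra hcon
      rw [not_lt] at hcon
      have hne' : (σ b).1 ≠ (σ a).1 := by
        intro h
        have hba := congrArg Fin.val (σ.injective (Fin.ext h))
        omega
      have hlt : (σ a).1 < (σ b).1 := by omega
      set t := (σ a).1 + 1 with htdef
      have htN : t ≤ 2 * i + 1 := (σ a).isLt
      have hm1 : sF a ∈ bAdj σ t := by
        rw [mem_bAdj, if_pos hae]
        omega
      have hm2 : sF b ∈ bAdj σ t := by
        rw [mem_bAdj, if_neg (show ¬ b.1 % 2 = 0 by omega)]
        omega
      rw [← hAt t htN] at hm1 hm2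
      have hnesF : sF a ≠ sF b := by
        intro h
        have := congrArg Fin.val (sF_inj h)
        omega
      rcases hadj with hadj | hadj
      · exact (L.getD t default).disj _ hm1 _ hm2 hnesF
          b.1 (Sym2.mem_iff.mpr (Or.inr (by omega))) (Sym2.mem_iff.mpr (Or.inl rfl))
      · exact (L.getD t default).disj _ hm1 _ hm2 hnesF
          a.1 (Sym2.mem_iff.mpr (Or.inl rfl)) (Sym2.mem_iff.mpr (Or.inr (by omega)))
    intro j hj
    split_ifs with hje
    · exact Fin.lt_def.mpr (key ⟨j, by omega⟩ ⟨j + 1, hj⟩ hje (Or.inl rfl))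
    · exact Fin.lt_def.mpr (key ⟨j + 1, hj⟩ ⟨j, by omega⟩ (by simp; omega) (Or.inr rfl))
  refine ⟨σ, hσvalid, ?_⟩
  refine List.ext_getElem (by rw [bList_length, hlen]) ?_
  intro t ht1 ht2
  rw [bList_getElem σ hσvalid (by rwa [bList_length] at ht2)]
  apply Genome.ext'
  show (L[t]).adj = bAdj σ t
  rw [← List.getD_eq_getElem L default ht1]
  exact hAt t (by rw [hlen] at ht1; omega)

-- ===== injectivity of the scenario construction =====

theorem bList_inj {n : ℕ} {σ σ' : Equiv.Perm (Fin n)} {hσ : Valid σ} {hσ' : Valid σ'}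
    (h : bList σ hσ = bList σ' hσ') : σ = σ' := by
  have hadj : ∀ t, t < n + 1 → bAdj σ t = bAdj σ' t := by
    intro t ht
    have e1 := bList_getElem σ hσ ht
    have e2 := bList_getElem σ' hσ' ht
    have : bGen σ hσ t = bGen σ' hσ' t := by
      rw [← e1, ← e2]
      exact List.getElem_of_eq h _
    exact congrArg Genome.adj this
  apply Equiv.ext
  intro k
  apply Fin.ext
  have htn : (σ' k).1 < n := (σ' k).isLt
  by_cases hk : k.1 % 2 = 0
  · have m1 : sF k ∈ bAdj σ ((σ' k).1 + 1) := by
      rw [hadj _ (by omega), mem_bAdj, if_pos hk]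
      omega
    have m2 : sF k ∉ bAdj σ (σ' k).1 := by
      rw [hadj _ (by omega), mem_bAdj, if_pos hk]
      omega
    rw [mem_bAdj, if_pos hk] at m1
    rw [mem_bAdj, if_pos hk] at m2
    omega
  · have m1 : sF k ∈ bAdj σ (σ' k).1 := by
      rw [hadj _ (by omega), mem_bAdj, if_neg hk]
    have m2 : sF k ∉ bAdj σ ((σ' k).1 + 1) := by
      rw [hadj _ (by omega), mem_bAdj, if_neg hk]
      omega
    rw [mem_bAdj, if_neg hk] at m1
    rw [mem_bAdj, if_neg hk] at m2
    omega

-- ===== alternating permutations =====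

theorem valid_iff_alt {n : ℕ} (σ : Equiv.Perm (Fin n)) :
    Valid σ ↔ IsAltPerm (Fin.revPerm * σ) := by
  constructor
  · intro H j hj
    have h' := H j hj
    split_ifs at h' ⊢ with h
    · simpa [Equiv.Perm.mul_apply, Fin.rev_lt_rev] using h'
    · simpa [Equiv.Perm.mul_apply, Fin.rev_lt_rev] using h'
  · intro H j hj
    have h' := H j hj
    split_ifs at h' ⊢ with h
    · simpa [Equiv.Perm.mul_apply, Fin.rev_lt_rev] using h'
    · simpa [Equiv.Perm.mul_apply, Fin.rev_lt_rev] using h'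

theorem card_valid_eq_alt (n : ℕ) :
    Nat.card {σ : Equiv.Perm (Fin n) // Valid σ} = altPermCount n := by
  rw [altPermCount]
  refine Nat.card_congr (Equiv.subtypeEquiv
    (Equiv.mulLeft (Fin.revPerm : Equiv.Perm (Fin n))) (fun σ => ?_))
  rw [Equiv.coe_mulLeft]
  exact valid_iff_alt σ

-- ===== the final count =====

theorem numMPS_eq {i : ℕ} {G1 G2 : Genome ℕ}
    (h1 : G1.adj = (Finset.Icc 1 i).image fun j => s(2 * j - 1, 2 * j))
    (h2 : G2.adj = (Finset.Icc 0 i).image fun j => s(2 * j, 2 * j + 1)) :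
    NumMPS G1 G2 = altPermCount (2 * i + 1) := by
  rw [NumMPS, ← Nat.card_coe_set_eq, ← card_valid_eq_alt (2 * i + 1)]
  apply Nat.card_congr
  have hbij : Function.Bijective
      (fun x : {σ : Equiv.Perm (Fin (2 * i + 1)) // Valid σ} =>
        (⟨bList x.1 x.2, by
          refine Set.mem_setOf.mpr ⟨bList_scenario h1 h2 x.1 x.2, ?_⟩
          rw [bList_length, dSCJ_eq h1 h2]⟩ :
          {L : List (Genome ℕ) // L ∈ {L | IsMPS G1 G2 L}})) := by
    constructor
    · intro x y hxy
      have := congrArg Subtype.val hxy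
      simp only at this
      exact Subtype.ext (bList_inj this)
    · rintro ⟨L, hL⟩
      obtain ⟨hsc, hlen⟩ := Set.mem_setOf.mp hL
      rw [dSCJ_eq h1 h2] at hlen
      obtain ⟨σ, hσ, hLeq⟩ := scenario_struct h1 h2 hsc hlen
      exact ⟨⟨σ, hσ⟩, Subtype.ext hLeq.symm⟩
  exact (Equiv.ofBijective _ hbij).symm

end WS

/-- For the pair of genomes forming a single W-shaped path with `i ≥ 0`
adjacencies in `G1` (extremities `0, …, 2i+1`, `Π1 = {{2j-1, 2j} : 1 ≤ j ≤ i}`,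
`Π2 = {{2j, 2j+1} : 0 ≤ j ≤ i}`), the number of most parsimonious SCJ scenarios from
`G1` to `G2` equals `A (2i+1)`, the number of alternating permutations of size `2i+1`. -/
theorem wShaped_count (i : ℕ) (G1 G2 : Genome ℕ)
    (h1 : G1.adj = (Finset.Icc 1 i).image fun j => s(2 * j - 1, 2 * j))
    (h2 : G2.adj = (Finset.Icc 0 i).image fun j => s(2 * j, 2 * j + 1)) :
    NumMPS G1 G2 = altPermCount (2 * i + 1) := by
  exact WS.numMPS_eq h1 h2
end

section
/- For every i ≥ 0, consider the pair of genomes forming a single odd path with i adjacencies in each genome: on extremities x_1, …, x_{2i+1}, take Π1 = {{x_{2j-1}, x_{2j}} : 1 ≤ j ≤ i} and Π2 = {{x_{2j}, x_{2j+1}} : 1 ≤ j ≤ i}. Then the number of most parsimonious SCJ scenarios from G1 to G2 equals A_{2i}, the number of alternating permutations of size 2i. -/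
variable {V : Type*} [DecidableEq V]

namespace OddPathAux

open Finset

theorem genome_ext {V : Type*} {G G' : Genome V} (h : G.adj = G'.adj) : G = G' := by
  cases G; cases G'; simp_all

def op (p : ℕ) : Sym2 ℕ := s(p + 1, p + 2)

lemma op_inj : Function.Injective op := by
  intro a b h
  rw [op, op, Sym2.eq_iff] at h
  omega

def pcond (n : ℕ) (σ : Equiv.Perm (Fin n)) (t : ℕ) (p : Fin n) : Prop :=
  if (p : ℕ) % 2 = 0 then t ≤ (σ p : ℕ) else (σ p : ℕ) < t

instance (n : ℕ) (σ : Equiv.Perm (Fin n)) (t : ℕ) : DecidablePred (pcond n σ t) := fun p => by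
  unfold pcond; infer_instance

def stateSet (n : ℕ) (σ : Equiv.Perm (Fin n)) (t : ℕ) : Finset (Sym2 ℕ) :=
  (Finset.univ.filter (pcond n σ t)).image fun p : Fin n => op (p : ℕ)

lemma mem_stateSet {n : ℕ} {σ : Equiv.Perm (Fin n)} {t : ℕ} {e : Sym2 ℕ} :
    e ∈ stateSet n σ t ↔ ∃ p : Fin n, op (p : ℕ) = e ∧ pcond n σ t p := by
  simp only [stateSet, mem_image, mem_filter, mem_univ, true_and]
  tauto

lemma op_mem_stateSet {n : ℕ} {σ : Equiv.Perm (Fin n)} {t : ℕ} {p : Fin n} :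
    op (p : ℕ) ∈ stateSet n σ t ↔ pcond n σ t p := by
  rw [mem_stateSet]
  constructor
  · rintro ⟨q, hq, hc⟩
    rwa [show q = p from Fin.ext (op_inj hq)] at hc
  · exact fun h => ⟨p, rfl, h⟩

lemma alt_no_both {n : ℕ} {σ : Equiv.Perm (Fin n)} (hσ : IsAltPerm σ) {a b : Fin n}
    (hab : (b : ℕ) = (a : ℕ) + 1) {t : ℕ} (ha : pcond n σ t a) (hb : pcond n σ t b) : False := by
  have hlt : (a : ℕ) + 1 < n := hab ▸ b.2
  have h := hσ (a : ℕ) hlt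
  have ea : (⟨(a : ℕ), by omega⟩ : Fin n) = a := rfl
  have eb : (⟨(a : ℕ) + 1, hlt⟩ : Fin n) = b := Fin.ext (by simp [hab])
  rw [ea, eb] at h
  unfold pcond at ha hb
  rw [Fin.lt_def] at h
  by_cases hpar : (a : ℕ) % 2 = 0
  · rw [if_pos hpar] at h ha
    rw [if_neg (by omega)] at hb
    omega
  · rw [if_neg hpar] at h ha
    rw [if_pos (by omega)] at hb
    omega

def stateGenome (n : ℕ) (σ : Equiv.Perm (Fin n)) (hσ : IsAltPerm σ) (t : ℕ) : Genome ℕ where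
  adj := stateSet n σ t
  not_isDiag := by
    intro e he
    obtain ⟨p, rfl, -⟩ := mem_stateSet.mp he
    rw [op, Sym2.mk_isDiag_iff]
    omega
  disj := by
    intro e he e' he' hne x hx hx'
    obtain ⟨p, rfl, hc⟩ := mem_stateSet.mp he
    obtain ⟨q, rfl, hc'⟩ := mem_stateSet.mp he'
    rw [op, Sym2.mem_iff] at hx hx'
    have hpq : (p : ℕ) ≠ (q : ℕ) := fun h => hne (by rw [h])
    have : (q : ℕ) = (p : ℕ) + 1 ∨ (p : ℕ) = (q : ℕ) + 1 := by omega
    rcases this with h | h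
    · exact alt_no_both hσ h hc hc'
    · exact alt_no_both hσ h hc' hc

@[simp] lemma stateGenome_adj (n : ℕ) (σ : Equiv.Perm (Fin n)) (hσ : IsAltPerm σ) (t : ℕ) :
    (stateGenome n σ hσ t).adj = stateSet n σ t := rfl


lemma filter_succ_even {n : ℕ} {σ : Equiv.Perm (Fin n)} {t : ℕ} (ht : t < n) (q : Fin n)
    (hq : σ q = ⟨t, ht⟩) (hpar : (q : ℕ) % 2 = 0) :
    Finset.univ.filter (pcond n σ (t + 1)) = (Finset.univ.filter (pcond n σ t)).erase q := by
  ext p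
  simp only [mem_erase, mem_filter, mem_univ, true_and, and_true]
  by_cases hpq : p = q
  · subst hpq
    simp only [pcond, hpar, if_pos, hq]
    simp
  · have hne : (σ p : ℕ) ≠ t := by
      intro h
      exact hpq (σ.injective (by rw [hq]; exact Fin.ext h))
    have hqt : (σ q : ℕ) = t := by rw [hq]
    constructor
    · intro h
      refine ⟨hpq, ?_⟩
      unfold pcond at h ⊢
      split_ifs at h ⊢ <;> omega
    · rintro ⟨-, h⟩
      unfold pcond at h ⊢
      split_ifs at h ⊢ <;> omega

lemma filter_succ_odd {n : ℕ} {σ : Equiv.Perm (Fin n)} {t : ℕ} (ht : t < n) (q : Fin n)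
    (hq : σ q = ⟨t, ht⟩) (hpar : (q : ℕ) % 2 ≠ 0) :
    Finset.univ.filter (pcond n σ (t + 1)) = insert q (Finset.univ.filter (pcond n σ t)) := by
  ext p
  simp only [mem_insert, mem_filter, mem_univ, true_and]
  by_cases hpq : p = q
  · subst hpq
    simp only [pcond, if_neg hpar, hq]
    simp
  · have hne : (σ p : ℕ) ≠ t := by
      intro h
      exact hpq (σ.injective (by rw [hq]; exact Fin.ext h))
    constructor
    · intro h
      refine Or.inr ?_
      unfold pcond at h ⊢
      split_ifs at h ⊢ <;> omega
    · rintro (h | h)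
      · exact absurd h hpq
      · unfold pcond at h ⊢
        split_ifs at h ⊢ <;> omega

lemma op_val_inj : Function.Injective fun p : Fin n => op (p : ℕ) :=
  fun a b h => Fin.ext (op_inj h)

lemma stateSet_succ_even {n : ℕ} {σ : Equiv.Perm (Fin n)} {t : ℕ} (ht : t < n) (q : Fin n)
    (hq : σ q = ⟨t, ht⟩) (hpar : (q : ℕ) % 2 = 0) :
    stateSet n σ (t + 1) = (stateSet n σ t).erase (op (q : ℕ)) := by
  unfold stateSet
  rw [filter_succ_even ht q hq hpar, Finset.image_erase op_val_inj]

lemma stateSet_succ_odd {n : ℕ} {σ : Equiv.Perm (Fin n)} {t : ℕ} (ht : t < n) (q : Fin n)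
    (hq : σ q = ⟨t, ht⟩) (hpar : (q : ℕ) % 2 ≠ 0) :
    stateSet n σ (t + 1) = insert (op (q : ℕ)) (stateSet n σ t) := by
  unfold stateSet
  rw [filter_succ_odd ht q hq hpar, Finset.image_insert]

def mpsList (n : ℕ) (σ : Equiv.Perm (Fin n)) (hσ : IsAltPerm σ) : List (Genome ℕ) :=
  (List.range (n + 1)).map (stateGenome n σ hσ)

@[simp] lemma mpsList_length {n : ℕ} {σ : Equiv.Perm (Fin n)} {hσ : IsAltPerm σ} :
    (mpsList n σ hσ).length = n + 1 := by simp [mpsList]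

lemma mpsList_getD {n : ℕ} {σ : Equiv.Perm (Fin n)} {hσ : IsAltPerm σ} {t : ℕ} (ht : t ≤ n) :
    (mpsList n σ hσ).getD t default = stateGenome n σ hσ t := by
  rw [List.getD_eq_getElem _ _ (by simp [mpsList]; omega)]
  simp [mpsList]

lemma mpsList_head? {n : ℕ} {σ : Equiv.Perm (Fin n)} {hσ : IsAltPerm σ} :
    (mpsList n σ hσ).head? = some (stateGenome n σ hσ 0) := by
  rw [mpsList, List.range_succ_eq_map]
  simp

lemma mpsList_getLast? {n : ℕ} {σ : Equiv.Perm (Fin n)} {hσ : IsAltPerm σ} :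
    (mpsList n σ hσ).getLast? = some (stateGenome n σ hσ n) := by
  rw [mpsList, List.range_succ, List.map_append]
  simp

lemma mpsList_chain' {n : ℕ} {σ : Equiv.Perm (Fin n)} {hσ : IsAltPerm σ} :
    (mpsList n σ hσ).Chain' SCJStep := by
  rw [mpsList, List.Chain', List.isChain_map, List.isChain_range_succ]
  intro m hm
  set q := σ.symm ⟨m, hm⟩ with hqdef
  have hq : σ q = ⟨m, hm⟩ := σ.apply_symm_apply _
  by_cases hpar : (q : ℕ) % 2 = 0
  · refine ⟨op (q : ℕ), Or.inl ⟨?_, ?_⟩⟩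
    · rw [stateGenome_adj, op_mem_stateSet]
      unfold pcond
      rw [if_pos hpar, hq]
    · rw [stateGenome_adj, stateGenome_adj, stateSet_succ_even hm q hq hpar]
  · refine ⟨op (q : ℕ), Or.inr ⟨?_, ?_⟩⟩
    · rw [stateGenome_adj, op_mem_stateSet]
      unfold pcond
      rw [if_neg hpar, hq]
      simp
    · rw [stateGenome_adj, stateGenome_adj, stateSet_succ_odd hm q hq hpar]


section Path

variable {i : ℕ} {G1 G2 : Genome ℕ}
  (h1 : G1.adj = (Finset.Icc 1 i).image fun j => s(2 * j - 1, 2 * j))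
  (h2 : G2.adj = (Finset.Icc 1 i).image fun j => s(2 * j, 2 * j + 1))

include h1 in
lemma G1_mem (e : Sym2 ℕ) :
    e ∈ G1.adj ↔ ∃ p : Fin (2 * i), (p : ℕ) % 2 = 0 ∧ op (p : ℕ) = e := by
  rw [h1]
  simp only [mem_image, mem_Icc]
  constructor
  · rintro ⟨j, ⟨hj1, hj2⟩, rfl⟩
    refine ⟨⟨2 * j - 2, by omega⟩, by simp; omega, ?_⟩
    show op (2 * j - 2) = _
    rw [op, show 2 * j - 2 + 1 = 2 * j - 1 by omega, show 2 * j - 2 + 2 = 2 * j by omega]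
  · rintro ⟨p, hpar, rfl⟩
    have hp := p.2
    refine ⟨(p : ℕ) / 2 + 1, by omega, ?_⟩
    rw [op, show 2 * ((p : ℕ) / 2 + 1) - 1 = (p : ℕ) + 1 by omega,
      show 2 * ((p : ℕ) / 2 + 1) = (p : ℕ) + 2 by omega]

include h2 in
lemma G2_mem (e : Sym2 ℕ) :
    e ∈ G2.adj ↔ ∃ p : Fin (2 * i), (p : ℕ) % 2 = 1 ∧ op (p : ℕ) = e := by
  rw [h2]
  simp only [mem_image, mem_Icc]
  constructor
  · rintro ⟨j, ⟨hj1, hj2⟩, rfl⟩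
    refine ⟨⟨2 * j - 1, by omega⟩, by simp; omega, ?_⟩
    show op (2 * j - 1) = _
    rw [op, show 2 * j - 1 + 1 = 2 * j by omega, show 2 * j - 1 + 2 = 2 * j + 1 by omega]
  · rintro ⟨p, hpar, rfl⟩
    have hp := p.2
    refine ⟨((p : ℕ) + 1) / 2, by omega, ?_⟩
    rw [op, show 2 * (((p : ℕ) + 1) / 2) = (p : ℕ) + 1 by omega]

include h1 in
lemma G1_eq_state (σ : Equiv.Perm (Fin (2 * i))) : G1.adj = stateSet (2 * i) σ 0 := by
  ext e
  rw [G1_mem h1, mem_stateSet]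
  constructor
  · rintro ⟨p, hpar, rfl⟩
    exact ⟨p, rfl, by unfold pcond; rw [if_pos hpar]; omega⟩
  · rintro ⟨p, rfl, hc⟩
    refine ⟨p, ?_, rfl⟩
    unfold pcond at hc
    by_contra hpar
    rw [if_neg hpar] at hc
    omega

include h2 in
lemma G2_eq_state (σ : Equiv.Perm (Fin (2 * i))) : G2.adj = stateSet (2 * i) σ (2 * i) := by
  ext e
  rw [G2_mem h2, mem_stateSet]
  constructor
  · rintro ⟨p, hpar, rfl⟩
    exact ⟨p, rfl, by unfold pcond; rw [if_neg (by omega)]; exact (σ p).2⟩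
  · rintro ⟨p, rfl, hc⟩
    refine ⟨p, ?_, rfl⟩
    unfold pcond at hc
    have := (σ p).2
    by_contra hpar
    rw [if_pos (by omega)] at hc
    omega

include h1 h2 in
lemma mpsList_isScenario (σ : Equiv.Perm (Fin (2 * i))) (hσ : IsAltPerm σ) :
    IsScenario G1 G2 (mpsList (2 * i) σ hσ) := by
  refine ⟨?_, ?_, mpsList_chain'⟩
  · rw [mpsList_head?]
    congr 1
    exact genome_ext (by rw [stateGenome_adj, ← G1_eq_state h1])
  · rw [mpsList_getLast?]
    congr 1
    exact genome_ext (by rw [stateGenome_adj, ← G2_eq_state h2])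

include h1 in
lemma cardG1 : G1.adj.card = i := by
  rw [h1, card_image_of_injOn, Nat.card_Icc]
  · omega
  · intro a ha b hb h
    simp only [mem_coe, mem_Icc] at ha hb
    rw [Sym2.eq_iff] at h
    omega

include h2 in
lemma cardG2 : G2.adj.card = i := by
  rw [h2, card_image_of_injOn, Nat.card_Icc]
  · omega
  · intro a ha b hb h
    simp only [mem_coe, mem_Icc] at ha hb
    rw [Sym2.eq_iff] at h
    omega

include h1 h2 in
lemma disjG : Disjoint G1.adj G2.adj := by
  rw [Finset.disjoint_left]
  intro e he1 he2
  rw [h1] at he1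
  rw [h2] at he2
  simp only [mem_image, mem_Icc] at he1 he2
  obtain ⟨j, ⟨hj1, -⟩, rfl⟩ := he1
  obtain ⟨k, ⟨hk1, -⟩, h⟩ := he2
  rw [Sym2.eq_iff] at h
  omega

include h1 h2 in
lemma sd_card : (symmDiff G1.adj G2.adj).card = 2 * i := by
  rw [symmDiff_def]
  have hd := disjG h1 h2
  rw [sup_eq_union, Disjoint.sdiff_eq_left hd, Disjoint.sdiff_eq_left hd.symm,
    card_union_of_disjoint hd, cardG1 h1, cardG2 h2]
  omega

end Path

lemma step_sd_le {G G' : Genome ℕ} (h : SCJStep G G') : (symmDiff G.adj G'.adj).card ≤ 1 := by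
  obtain ⟨e, h | h⟩ := h
  · have hs : symmDiff G.adj G'.adj ⊆ {e} := by
      intro x hx
      rw [Finset.mem_symmDiff, h.2] at hx
      simp only [Finset.mem_erase] at hx
      simp only [Finset.mem_singleton]
      tauto
    simpa using card_le_card hs
  · have hs : symmDiff G.adj G'.adj ⊆ {e} := by
      intro x hx
      rw [Finset.mem_symmDiff, h.2] at hx
      simp only [Finset.mem_insert] at hx
      simp only [Finset.mem_singleton]
      tauto
    simpa using card_le_card hs

lemma sd_tri (a b c : Finset (Sym2 ℕ)) :
    (symmDiff a c).card ≤ (symmDiff a b).card + (symmDiff b c).card :=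
  le_trans (card_le_card (symmDiff_triangle a b c)) (card_union_le _ _)

lemma scenario_lower : ∀ (L : List (Genome ℕ)), L.Chain' SCJStep → ∀ {G G' : Genome ℕ},
    L.head? = some G → L.getLast? = some G' → (symmDiff G.adj G'.adj).card < L.length
  | [], _, _, _, hh, _ => by simp at hh
  | [G0], _, G, G', hh, hl => by
      simp only [List.head?_cons, Option.some.injEq] at hh
      simp only [List.getLast?_singleton, Option.some.injEq] at hl
      subst hh; subst hl
      simp [symmDiff_self]
  | G0 :: G1' :: rest, hc, G, G', hh, hl => by
      rw [List.Chain', List.isChain_cons_cons] at hc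
      simp only [List.head?_cons, Option.some.injEq] at hh
      subst hh
      rw [List.getLast?_cons_cons] at hl
      have ih := scenario_lower (G1' :: rest) hc.2 rfl hl
      have h1 := step_sd_le hc.1
      have h3 := sd_tri G0.adj G1'.adj G'.adj
      simp only [List.length_cons] at ih ⊢
      omega


def f0 (i : ℕ) (p : Fin (2 * i)) : Fin (2 * i) :=
  ⟨if (p : ℕ) % 2 = 0 then (p : ℕ) / 2 else i + (p : ℕ) / 2, by
    have := p.2; split_ifs <;> omega⟩

lemma f0_inj (i : ℕ) : Function.Injective (f0 i) := by
  intro a b h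
  have ha := a.2
  have hb := b.2
  rw [f0, f0, Fin.mk.injEq] at h
  apply Fin.ext
  split_ifs at h <;> omega

noncomputable def sigma0 (i : ℕ) : Equiv.Perm (Fin (2 * i)) :=
  Equiv.ofBijective (f0 i) (Finite.injective_iff_bijective.mp (f0_inj i))

lemma f0_val (i : ℕ) (p : Fin (2 * i)) :
    (f0 i p : ℕ) = if (p : ℕ) % 2 = 0 then (p : ℕ) / 2 else i + (p : ℕ) / 2 := rfl

lemma sigma0_alt (i : ℕ) : IsAltPerm (sigma0 i) := by
  intro p h
  have hv : ∀ q : Fin (2 * i), ((sigma0 i) q : ℕ) =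
      if (q : ℕ) % 2 = 0 then (q : ℕ) / 2 else i + (q : ℕ) / 2 := fun q => rfl
  split_ifs with hpar
  · rw [Fin.lt_def, hv, hv, Fin.val_mk, Fin.val_mk]
    split_ifs <;> omega
  · rw [Fin.lt_def, hv, hv, Fin.val_mk, Fin.val_mk]
    split_ifs <;> omega

lemma dSCJ_eq {i : ℕ} {G1 G2 : Genome ℕ}
    (h1 : G1.adj = (Finset.Icc 1 i).image fun j => s(2 * j - 1, 2 * j))
    (h2 : G2.adj = (Finset.Icc 1 i).image fun j => s(2 * j, 2 * j + 1)) :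
    dSCJ G1 G2 = 2 * i := by
  have hmem : 2 * i ∈ {n | ∃ L, IsScenario G1 G2 L ∧ L.length = n + 1} :=
    ⟨mpsList (2 * i) (sigma0 i) (sigma0_alt i),
      mpsList_isScenario h1 h2 _ _, mpsList_length⟩
  have hlb : ∀ m ∈ {n | ∃ L, IsScenario G1 G2 L ∧ L.length = n + 1}, 2 * i ≤ m := by
    rintro m ⟨L, ⟨hh, hl, hc⟩, hlen⟩
    have := scenario_lower L hc hh hl
    rw [hlen, sd_card h1 h2] at this
    omega
  exact le_antisymm (Nat.sInf_le hmem) (hlb _ (Nat.sInf_mem ⟨_, hmem⟩))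


section Surj

variable {i : ℕ} {G1 G2 : Genome ℕ}
  (h1 : G1.adj = (Finset.Icc 1 i).image fun j => s(2 * j - 1, 2 * j))
  (h2 : G2.adj = (Finset.Icc 1 i).image fun j => s(2 * j, 2 * j + 1))

include h1 h2 in
lemma scenario_eq_mpsList (L : List (Genome ℕ)) (hsc : IsScenario G1 G2 L)
    (hlen : L.length = 2 * i + 1) :
    ∃ (σ : Equiv.Perm (Fin (2 * i))) (hσ : IsAltPerm σ), L = mpsList (2 * i) σ hσ := by
  classical
  obtain ⟨hh, hl, hc⟩ := hsc
  set A : ℕ → Finset (Sym2 ℕ) := fun t => (L.getD t default).adj with hAdef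
  -- endpoints
  have hA0 : A 0 = G1.adj := by
    cases L with
    | nil => simp at hh
    | cons a l =>
      simp only [List.head?_cons, Option.some.injEq] at hh
      rw [hAdef]
      simp [hh]
  have hAn : A (2 * i) = G2.adj := by
    rw [List.getLast?_eq_getElem?] at hl
    rw [show L.length - 1 = 2 * i from by omega] at hl
    rw [hAdef]
    simp only [List.getD_eq_getElem?_getD, hl, Option.getD_some]
  -- steps
  have hstep : ∀ t, t < 2 * i → SCJStep (L.getD t default) (L.getD (t + 1) default) := by
    intro t ht
    rw [List.Chain', List.isChain_iff_getElem] at hc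
    have h := hc t (by omega)
    rw [List.getD_eq_getElem _ _ (by omega), List.getD_eq_getElem _ _ (by omega)]
    simpa [List.get_eq_getElem] using h
  -- the potential function
  set f : ℕ → ℕ := fun t => (symmDiff (A t) G2.adj).card with hfdef
  have hstep_sd : ∀ t, t < 2 * i → f t ≤ f (t + 1) + 1 := by
    intro t ht
    have h : (symmDiff (A t) (A (t + 1))).card ≤ 1 := step_sd_le (hstep t ht)
    have h3 := sd_tri (A t) (A (t + 1)) G2.adj
    have e1 : f t = (symmDiff (A t) G2.adj).card := rfl
    have e2 : f (t + 1) = (symmDiff (A (t + 1)) G2.adj).card := rfl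
    omega
  have hchain : ∀ k t, t + k ≤ 2 * i → f t ≤ f (t + k) + k := by
    intro k
    induction k with
    | zero => intro t _; simp
    | succ k ih =>
      intro t ht
      have hs := hstep_sd t (by omega)
      have hi := ih (t + 1) (by omega)
      have : t + (k + 1) = t + 1 + k := by omega
      rw [this]
      omega
  have hf0 : f 0 = 2 * i := by rw [hfdef]; simp only [hA0]; exact sd_card h1 h2
  have hfn : f (2 * i) = 0 := by rw [hfdef]; simp only [hAn, symmDiff_self]; simp
  have hft : ∀ t, t ≤ 2 * i → f t = 2 * i - t := by
    intro t ht
    have ha := hchain (2 * i - t) t (by omega)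
    rw [show t + (2 * i - t) = 2 * i from by omega, hfn] at ha
    have hb := hchain t 0 (by omega)
    rw [hf0] at hb
    simp only [Nat.zero_add] at hb
    omega
  -- classification of steps
  have hclass : ∀ t, t < 2 * i → ∃ e,
      (e ∉ G2.adj ∧ e ∈ A t ∧ A (t + 1) = (A t).erase e) ∨
      (e ∈ G2.adj ∧ e ∉ A t ∧ A (t + 1) = insert e (A t)) := by
    intro t ht
    obtain ⟨e, hcut | hjoin⟩ := hstep t ht
    · have hc1 : e ∈ A t := hcut.1
      have hc2 : A (t + 1) = (A t).erase e := hcut.2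
      refine ⟨e, Or.inl ⟨?_, hc1, hc2⟩⟩
      intro he2
      have hsd : symmDiff (A (t + 1)) G2.adj = insert e (symmDiff (A t) G2.adj) := by
        rw [hc2]
        ext x
        simp only [Finset.mem_symmDiff, Finset.mem_insert, Finset.mem_erase]
        by_cases hxe : x = e
        · subst hxe; simp [hc1, he2]
        · simp [hxe]
      have hnm : e ∉ symmDiff (A t) G2.adj := by
        simp [Finset.mem_symmDiff, hc1, he2]
      have : f (t + 1) = f t + 1 := by
        rw [hfdef]
        simp only [hsd, card_insert_of_notMem hnm]
      have e1 := hft t (by omega)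
      have e2 := hft (t + 1) (by omega)
      omega
    · have hj1 : e ∉ A t := hjoin.1
      have hj2 : A (t + 1) = insert e (A t) := hjoin.2
      refine ⟨e, Or.inr ⟨?_, hj1, hj2⟩⟩
      by_contra he2
      have hsd : symmDiff (A (t + 1)) G2.adj = insert e (symmDiff (A t) G2.adj) := by
        rw [hj2]
        ext x
        simp only [Finset.mem_symmDiff, Finset.mem_insert]
        by_cases hxe : x = e
        · subst hxe; simp [hj1, he2]
        · simp [hxe]
      have hnm : e ∉ symmDiff (A t) G2.adj := by
        simp [Finset.mem_symmDiff, hj1, he2]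
      have : f (t + 1) = f t + 1 := by
        rw [hfdef]
        simp only [hsd, card_insert_of_notMem hnm]
      have e1 := hft t (by omega)
      have e2 := hft (t + 1) (by omega)
      omega
  -- invariants
  have hsub : ∀ t, t ≤ 2 * i → A t ⊆ G1.adj ∪ G2.adj := by
    intro t
    induction t with
    | zero => intro _; rw [hA0]; exact subset_union_left
    | succ t ih =>
      intro ht
      obtain ⟨e, hcut | hjoin⟩ := hclass t (by omega)
      · rw [hcut.2.2]
        exact subset_trans (erase_subset _ _) (ih (by omega))
      · rw [hjoin.2.2]
        intro x hx
        rcases Finset.mem_insert.mp hx with rfl | hx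
        · exact mem_union_right _ hjoin.1
        · exact ih (by omega) hx
  have hkeep : ∀ t, t < 2 * i → ∀ e ∈ G2.adj, e ∈ A t → e ∈ A (t + 1) := by
    intro t ht e he2 he
    obtain ⟨e', hcut | hjoin⟩ := hclass t ht
    · rw [hcut.2.2, Finset.mem_erase]
      exact ⟨fun h => hcut.1 (h ▸ he2), he⟩
    · rw [hjoin.2.2]
      exact Finset.mem_insert_of_mem he
  have hkeep' : ∀ k s, s + k ≤ 2 * i → ∀ e ∈ G2.adj, e ∈ A s → e ∈ A (s + k) := by
    intro k
    induction k with
    | zero => intro s _ e _ he; exact he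
    | succ k ih =>
      intro s hs e he2 he
      have : s + (k + 1) = (s + k) + 1 := by omega
      rw [this]
      exact hkeep (s + k) (by omega) e he2 (ih s (by omega) e he2 he)
  have hout : ∀ t, t < 2 * i → ∀ e, e ∉ G2.adj → e ∉ A t → e ∉ A (t + 1) := by
    intro t ht e he2 he
    obtain ⟨e', hcut | hjoin⟩ := hclass t ht
    · rw [hcut.2.2]
      exact fun h => he (Finset.mem_of_mem_erase h)
    · rw [hjoin.2.2, Finset.mem_insert]
      rintro (rfl | h)
      · exact he2 hjoin.1
      · exact he h
  have hout' : ∀ k s, s + k ≤ 2 * i → ∀ e, e ∉ G2.adj → e ∉ A s → e ∉ A (s + k) := by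
    intro k
    induction k with
    | zero => intro s _ e _ he; exact he
    | succ k ih =>
      intro s hs e he2 he
      have : s + (k + 1) = (s + k) + 1 := by omega
      rw [this]
      exact hout (s + k) (by omega) e he2 (ih s (by omega) e he2 he)
  have hdisj := disjG h1 h2
  -- toggle times
  have hmemiff : ∀ p : Fin (2 * i), ∃ d : ℕ, d < 2 * i ∧
      ∀ t, t ≤ 2 * i → (op (p : ℕ) ∈ A t ↔
        (if (p : ℕ) % 2 = 0 then t ≤ d else d < t)) := by
    intro p
    by_cases hpar : (p : ℕ) % 2 = 0
    · have he1 : op (p : ℕ) ∈ G1.adj := (G1_mem h1 _).mpr ⟨p, hpar, rfl⟩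
      have he2 : op (p : ℕ) ∉ G2.adj := Finset.disjoint_left.mp hdisj he1
      have hex : ∃ t, op (p : ℕ) ∉ A t := ⟨2 * i, by rw [hAn]; exact he2⟩
      set c := Nat.find hex with hcdef
      have hcn : c ≤ 2 * i := Nat.find_min' hex (by rw [hAn]; exact he2)
      have hc0 : c ≠ 0 := by
        intro h
        have := Nat.find_spec hex
        rw [← hcdef, h, hA0] at this
        exact this he1
      refine ⟨c - 1, by omega, ?_⟩
      intro t ht
      rw [if_pos hpar]
      constructor
      · intro hmem
        by_contra hlt
        have hct : c ≤ t := by omega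
        have := hout' (t - c) c (by omega) _ he2 (Nat.find_spec hex)
        rw [show c + (t - c) = t from by omega] at this
        exact this hmem
      · intro hle
        have := Nat.find_min hex (show t < c from by omega)
        simpa using this
    · have he2 : op (p : ℕ) ∈ G2.adj := (G2_mem h2 _).mpr ⟨p, by omega, rfl⟩
      have he1 : op (p : ℕ) ∉ G1.adj := fun h => Finset.disjoint_left.mp hdisj h he2
      have hex : ∃ t, op (p : ℕ) ∈ A t := ⟨2 * i, by rw [hAn]; exact he2⟩
      set c := Nat.find hex with hcdef
      have hcn : c ≤ 2 * i := Nat.find_min' hex (by rw [hAn]; exact he2)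
      have hc0 : c ≠ 0 := by
        intro h
        have := Nat.find_spec hex
        rw [← hcdef, h, hA0] at this
        exact he1 this
      refine ⟨c - 1, by omega, ?_⟩
      intro t ht
      rw [if_neg hpar]
      constructor
      · intro hmem
        have := Nat.find_min' hex hmem
        omega
      · intro hlt
        have hct : c ≤ t := by omega
        have := hkeep' (t - c) c (by omega) _ he2 (Nat.find_spec hex)
        rwa [show c + (t - c) = t from by omega] at this
  choose d hd1 hd2 using hmemiff
  -- uniqueness of the operation at each step
  have huniq : ∀ t, t < 2 * i → ∀ x y,
      ((x ∈ A t ∧ x ∉ A (t + 1)) ∨ (x ∉ A t ∧ x ∈ A (t + 1))) →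
      ((y ∈ A t ∧ y ∉ A (t + 1)) ∨ (y ∉ A t ∧ y ∈ A (t + 1))) → x = y := by
    intro t ht x y hx hy
    obtain ⟨e, hcut | hjoin⟩ := hclass t ht
    · have hxe : x = e := by
        rcases hx with ⟨hx1, hx2⟩ | ⟨hx1, hx2⟩
        · rw [hcut.2.2, Finset.mem_erase] at hx2
          by_contra hne
          exact hx2 ⟨hne, hx1⟩
        · rw [hcut.2.2] at hx2
          exact absurd (Finset.mem_of_mem_erase hx2) hx1
      have hye : y = e := by
        rcases hy with ⟨hy1, hy2⟩ | ⟨hy1, hy2⟩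
        · rw [hcut.2.2, Finset.mem_erase] at hy2
          by_contra hne
          exact hy2 ⟨hne, hy1⟩
        · rw [hcut.2.2] at hy2
          exact absurd (Finset.mem_of_mem_erase hy2) hy1
      rw [hxe, hye]
    · have hxe : x = e := by
        rcases hx with ⟨hx1, hx2⟩ | ⟨hx1, hx2⟩
        · rw [hjoin.2.2] at hx2
          exact absurd (Finset.mem_insert_of_mem hx1) hx2
        · rw [hjoin.2.2, Finset.mem_insert] at hx2
          tauto
      have hye : y = e := by
        rcases hy with ⟨hy1, hy2⟩ | ⟨hy1, hy2⟩
        · rw [hjoin.2.2] at hy2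
          exact absurd (Finset.mem_insert_of_mem hy1) hy2
        · rw [hjoin.2.2, Finset.mem_insert] at hy2
          tauto
      rw [hxe, hye]
  -- p toggles at step (d p)
  have htog : ∀ p : Fin (2 * i),
      (op (p : ℕ) ∈ A (d p) ∧ op (p : ℕ) ∉ A (d p + 1)) ∨
      (op (p : ℕ) ∉ A (d p) ∧ op (p : ℕ) ∈ A (d p + 1)) := by
    intro p
    have hdp := hd1 p
    by_cases hpar : (p : ℕ) % 2 = 0
    · left
      constructor
      · rw [hd2 p (d p) (by omega), if_pos hpar]
      · rw [hd2 p (d p + 1) (by omega), if_pos hpar]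
        omega
    · right
      constructor
      · rw [hd2 p (d p) (by omega), if_neg hpar]
        omega
      · rw [hd2 p (d p + 1) (by omega), if_neg hpar]
        omega
  have hdinj : Function.Injective d := by
    intro p q h
    have := huniq (d p) (hd1 p) (op (p : ℕ)) (op (q : ℕ)) (htog p) (by rw [h]; exact htog q)
    exact Fin.ext (op_inj this)
  -- the permutation
  set σfun : Fin (2 * i) → Fin (2 * i) := fun p => ⟨d p, hd1 p⟩ with hσfdef
  have hσfinj : Function.Injective σfun := by
    intro p q h
    exact hdinj (by simpa [hσfdef, Fin.mk.injEq] using h)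
  set σ : Equiv.Perm (Fin (2 * i)) :=
    Equiv.ofBijective σfun (Finite.injective_iff_bijective.mp hσfinj) with hσdef
  have hσapp : ∀ p, ((σ p : Fin (2 * i)) : ℕ) = d p := fun p => rfl
  -- alternating
  have hσalt : IsAltPerm σ := by
    intro p hp
    have hp' : p < 2 * i := by omega
    set a : Fin (2 * i) := ⟨p, hp'⟩ with hadef
    set b : Fin (2 * i) := ⟨p + 1, hp⟩ with hbdef
    have hvala : (a : ℕ) = p := rfl
    have hvalb : (b : ℕ) = p + 1 := rfl
    have hne : d a ≠ d b := fun h => by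
      have := hdinj h
      rw [hadef, hbdef, Fin.mk.injEq] at this
      omega
    have hcontra : ∀ t, t ≤ 2 * i → op (a : ℕ) ∈ A t → op (b : ℕ) ∈ A t → False := by
      intro t ht hma hmb
      have hne2 : op (a : ℕ) ≠ op (b : ℕ) := by
        intro h
        have := op_inj h
        rw [hvala, hvalb] at this
        omega
      have := (L.getD t default).disj _ hma _ hmb hne2 (p + 2)
        (by rw [hvala, op, Sym2.mem_iff]; right; rfl)
      exact this (by rw [hvalb, op, Sym2.mem_iff]; left; rfl)
    split_ifs with hpar
    · -- goal: σ a < σ b, i.e. d a < d b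
      rw [Fin.lt_def, hσapp, hσapp]
      by_contra hge
      have hlt : d b < d a := by omega
      have ht : d b + 1 ≤ 2 * i := by have := hd1 a; omega
      have hma : op (a : ℕ) ∈ A (d b + 1) := by
        rw [hd2 a (d b + 1) ht, if_pos (by rw [hvala]; exact hpar)]
        omega
      have hmb : op (b : ℕ) ∈ A (d b + 1) := by
        rw [hd2 b (d b + 1) ht, if_neg (by rw [hvalb]; omega)]
        omega
      exact hcontra _ ht hma hmb
    · -- p odd: goal σ b < σ a, i.e. d b < d a
      rw [Fin.lt_def, hσapp, hσapp]
      by_contra hge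
      have hlt : d a < d b := by omega
      have ht : d a + 1 ≤ 2 * i := by have := hd1 b; omega
      have hma : op (a : ℕ) ∈ A (d a + 1) := by
        rw [hd2 a (d a + 1) ht, if_neg (by rw [hvala]; exact hpar)]
        omega
      have hmb : op (b : ℕ) ∈ A (d a + 1) := by
        rw [hd2 b (d a + 1) ht, if_pos (by rw [hvalb]; omega)]
        omega
      exact hcontra _ ht hma hmb
  -- states agree
  have hpiff : ∀ (p : Fin (2 * i)) t, t ≤ 2 * i →
      (op (p : ℕ) ∈ A t ↔ pcond (2 * i) σ t p) := by
    intro p t ht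
    rw [hd2 p t ht]
    unfold pcond
    rw [hσapp]
  have hstate : ∀ t, t ≤ 2 * i → A t = stateSet (2 * i) σ t := by
    intro t ht
    ext e
    rw [mem_stateSet]
    constructor
    · intro he
      have hu := hsub t ht he
      rw [Finset.mem_union] at hu
      rcases hu with h | h
      · obtain ⟨p, hpar, rfl⟩ := (G1_mem h1 e).mp h
        exact ⟨p, rfl, (hpiff p t ht).mp he⟩
      · obtain ⟨p, hpar, rfl⟩ := (G2_mem h2 e).mp h
        exact ⟨p, rfl, (hpiff p t ht).mp he⟩
    · rintro ⟨p, rfl, hcond⟩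
      exact (hpiff p t ht).mpr hcond
  -- conclude
  refine ⟨σ, hσalt, ?_⟩
  apply List.ext_get (by rw [hlen, mpsList_length])
  intro m hm1 hm2
  have hm : m ≤ 2 * i := by rw [hlen] at hm1; omega
  have e1 : L.get ⟨m, hm1⟩ = L.getD m default := (List.getD_eq_getElem _ _ hm1).symm
  have e2 : (mpsList (2 * i) σ hσalt).get ⟨m, hm2⟩ =
      (mpsList (2 * i) σ hσalt).getD m default := (List.getD_eq_getElem _ _ hm2).symm
  rw [e1, e2, mpsList_getD hm]
  exact genome_ext (by rw [stateGenome_adj, ← hstate m hm])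

end Surj


lemma stateSet_le_aux {n : ℕ} (τ τ' : Equiv.Perm (Fin n))
    (hss : ∀ t, t ≤ n → stateSet n τ t = stateSet n τ' t) (p : Fin n) :
    ((τ p : Fin n) : ℕ) ≤ ((τ' p : Fin n) : ℕ) := by
  by_cases hpar : (p : ℕ) % 2 = 0
  · by_contra h
    set t := ((τ' p : Fin n) : ℕ) + 1 with htdef
    have ht : t ≤ n := by have := (τ' p).2; omega
    have m1 : op (p : ℕ) ∈ stateSet n τ t :=
      op_mem_stateSet.mpr (by unfold pcond; rw [if_pos hpar]; omega)
    rw [hss t ht] at m1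
    have m2 := op_mem_stateSet.mp m1
    unfold pcond at m2
    rw [if_pos hpar] at m2
    omega
  · by_contra h
    set t := ((τ' p : Fin n) : ℕ) + 1 with htdef
    have ht : t ≤ n := by have := (τ' p).2; omega
    have m1 : op (p : ℕ) ∈ stateSet n τ' t :=
      op_mem_stateSet.mpr (by unfold pcond; rw [if_neg hpar]; omega)
    rw [← hss t ht] at m1
    have m2 := op_mem_stateSet.mp m1
    unfold pcond at m2
    rw [if_neg hpar] at m2
    omega

lemma mpsList_inj {n : ℕ} {σ σ' : Equiv.Perm (Fin n)} {hσ : IsAltPerm σ} {hσ' : IsAltPerm σ'}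
    (h : mpsList n σ hσ = mpsList n σ' hσ') : σ = σ' := by
  have hss : ∀ t, t ≤ n → stateSet n σ t = stateSet n σ' t := by
    intro t ht
    have h' := congrArg (fun l => (l.getD t default).adj) h
    simpa only [mpsList_getD ht, stateGenome_adj] using h' 
  apply Equiv.ext
  intro p
  exact Fin.ext (le_antisymm (stateSet_le_aux σ σ' hss p)
    (stateSet_le_aux σ' σ (fun t ht => (hss t ht).symm) p))

end OddPathAux

open OddPathAux

/-- For the pair of genomes forming a single odd path with `i ≥ 0`
adjacencies in each genome (extremities `1, …, 2i+1`, `Π1 = {{2j-1, 2j} : 1 ≤ j ≤ i}`,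
`Π2 = {{2j, 2j+1} : 1 ≤ j ≤ i}`), the number of most parsimonious SCJ scenarios from
`G1` to `G2` equals `A (2i)`, the number of alternating permutations of size `2i`. -/
theorem oddPath_count (i : ℕ) (G1 G2 : Genome ℕ)
    (h1 : G1.adj = (Finset.Icc 1 i).image fun j => s(2 * j - 1, 2 * j))
    (h2 : G2.adj = (Finset.Icc 1 i).image fun j => s(2 * j, 2 * j + 1)) :
    NumMPS G1 G2 = altPermCount (2 * i) := by
  classical
  have hd := dSCJ_eq h1 h2
  set F : {σ : Equiv.Perm (Fin (2 * i)) // IsAltPerm σ} → List (Genome ℕ) :=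
    fun σp => mpsList (2 * i) σp.1 σp.2 with hFdef
  have hset : {L | IsMPS G1 G2 L} = Set.range F := by
    ext L
    simp only [Set.mem_setOf_eq, Set.mem_range]
    constructor
    · rintro ⟨hsc, hlen⟩
      rw [hd] at hlen
      obtain ⟨σ, hσ, rfl⟩ := scenario_eq_mpsList h1 h2 L hsc hlen
      exact ⟨⟨σ, hσ⟩, rfl⟩
    · rintro ⟨⟨σ, hσ⟩, rfl⟩
      exact ⟨mpsList_isScenario h1 h2 σ hσ, by rw [hd, hFdef]; simp⟩
  have hFinj : Function.Injective F := by
    rintro ⟨σ, hσ⟩ ⟨σ', hσ'⟩ hEq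
    exact Subtype.ext (mpsList_inj hEq)
  rw [NumMPS, hset, ← Nat.card_coe_set_eq, Nat.card_range_of_injective hFinj]
  rfl
end
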